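/- arXiv:1108.5904 — 6 statements merged into one kernel-verified Lean document; each statement's English description precedes it below -/
import Mathlib

section
/- For all positive integers k ≤ m there exists a (k,m)-selective family of size O(k · log(m/k)); precisely, there is an absolute constant C > 0 such that for all integers 1 ≤ k ≤ m there exists a family F of subsets of {1,…,m} with |F| ≤ C · k · (1 + Real.log (m / k)) such that for every nonempty subset S ⊆ {1,…,m} with |S| ≤ k there exists T ∈ F with |T ∩ S| = 1. -/
open Finset



lemma pow_succ_le_four_mul_pow {b e : ℕ} (hb : 1 ≤ b) (he : e ≤ b) :
    ((b + 1 : ℕ) : ℝ) ^ e ≤ 4 * (b : ℝ) ^ e := by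
  have hb0 : (0 : ℝ) < b := by exact_mod_cast hb
  have h1 : ((b + 1 : ℕ) : ℝ) = b * (1 + 1 / b) := by
    push_cast; field_simp
  have h2 : (1 + 1 / (b : ℝ)) ≤ Real.exp (1 / b) := by
    have := Real.add_one_le_exp (1 / (b : ℝ)); linarith
  have h3 : (1 + 1 / (b : ℝ)) ^ e ≤ Real.exp (1 / b) ^ e := by
    apply pow_le_pow_left₀ (by positivity) h2
  have h4 : Real.exp (1 / (b:ℝ)) ^ e = Real.exp (e / b) := by
    rw [← Real.exp_nat_mul]; ring_nf
  have h5 : Real.exp ((e : ℝ) / b) ≤ Real.exp 1 := by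
    apply Real.exp_le_exp.2
    rw [div_le_one hb0]; exact_mod_cast he
  have h6 : Real.exp 1 ≤ 4 := by
    have := Real.exp_one_lt_d9; linarith
  calc ((b + 1 : ℕ) : ℝ) ^ e = (b : ℝ) ^ e * (1 + 1 / b) ^ e := by
        rw [h1, mul_pow]
    _ ≤ (b : ℝ) ^ e * 4 := by
        have : (1 + 1 / (b:ℝ)) ^ e ≤ 4 := by rw [h4] at h3; linarith
        exact mul_le_mul_of_nonneg_left this (by positivity)
    _ = 4 * (b : ℝ) ^ e := by ring

lemma nat_pow_succ_le_four_mul_pow {b e : ℕ} (hb : 1 ≤ b) (he : e ≤ b) :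
    (b + 1) ^ e ≤ 4 * b ^ e := by
  have := pow_succ_le_four_mul_pow hb he
  exact_mod_cast this

lemma good_count (m r : ℕ) (z : Fin r) (S : Finset (Fin m)) :
    S.card * ((r - 1) ^ (S.card - 1) * r ^ (m - S.card)) ≤
      (Finset.univ.filter
        (fun g : Fin m → Fin r => (S.filter fun x => g x = z).card = 1)).card := by
  classical
  set G : Fin m → Finset (Fin m → Fin r) := fun x =>
    Fintype.piFinset (fun y => if y = x then {z} else if y ∈ S then {z}ᶜ else Finset.univ)
    with hG
  have hmem : ∀ x ∈ S, ∀ g, g ∈ G x ↔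
      (g x = z ∧ ∀ y ∈ S, y ≠ x → g y ≠ z) := by
    intro x hx g
    simp only [hG, Fintype.mem_piFinset]
    constructor
    · intro h
      refine ⟨by simpa using h x, fun y hy hyx => ?_⟩
      have := h y; simp [if_neg hyx, hy] at this; exact this
    · intro ⟨h1, h2⟩ y
      by_cases hyx : y = x
      · subst hyx; simp [h1]
      · by_cases hyS : y ∈ S
        · simp [hyx, hyS]; exact h2 y hyS hyx
        · simp [hyx, hyS]
  have hsub : S.biUnion G ⊆ Finset.univ.filter
      (fun g : Fin m → Fin r => (S.filter fun y => g y = z).card = 1) := by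
    intro g hg
    rw [mem_biUnion] at hg
    obtain ⟨x, hx, hg⟩ := hg
    rw [hmem x hx g] at hg
    simp only [mem_filter, mem_univ, true_and]
    have : S.filter (fun y => g y = z) = {x} := by
      ext y
      simp only [mem_filter, mem_singleton]
      constructor
      · rintro ⟨hyS, hgy⟩
        by_contra hyx
        exact hg.2 y hyS hyx hgy
      · rintro rfl; exact ⟨hx, hg.1⟩
    rw [this, card_singleton]
  have hcardG : ∀ x ∈ S, (G x).card = (r - 1) ^ (S.card - 1) * r ^ (m - S.card) := by
    intro x hx
    rw [hG]
    rw [Fintype.card_piFinset]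
    have hc : ∀ y : Fin m, (if y = x then ({z} : Finset (Fin r)) else if y ∈ S then {z}ᶜ
        else Finset.univ).card = if y = x then 1 else if y ∈ S then r - 1 else r := by
      intro y
      by_cases h1 : y = x
      · simp [h1]
      · by_cases h2 : y ∈ S <;>
          simp [h1, h2, Finset.card_compl, Fintype.card_fin]
    rw [Finset.prod_congr rfl (fun y _ => hc y)]
    rw [← Finset.prod_filter_mul_prod_filter_not Finset.univ (· ∈ S)]
    have e1 : (Finset.univ.filter (· ∈ S)) = S := by ext y; simp
    have e2 : ∏ y ∈ Finset.univ.filter (fun y => ¬ y ∈ S),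
        (if y = x then 1 else if y ∈ S then r - 1 else r) = r ^ (m - S.card) := by
      have ec : (Finset.univ.filter (fun y => ¬ y ∈ S)) = Sᶜ := by ext y; simp
      rw [Finset.prod_congr ec (fun y hy => ?_), Finset.prod_const, Finset.card_compl,
        Fintype.card_fin]
      simp only [mem_compl] at hy
      have hyx : y ≠ x := fun h => hy (h ▸ hx)
      simp [hyx, hy]
    have e3 : ∏ y ∈ Finset.univ.filter (· ∈ S),
        (if y = x then 1 else if y ∈ S then r - 1 else r) = (r - 1) ^ (S.card - 1) := by
      have e4 : ∀ y ∈ S.erase x,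
          (if y = x then 1 else if y ∈ S then r - 1 else r) = r - 1 := by
        intro y hy
        have := Finset.mem_erase.1 hy
        simp [this.1, this.2]
      rw [Finset.prod_congr e1 (fun y _ => rfl)]
      rw [← Finset.mul_prod_erase S _ hx, if_pos rfl, one_mul]
      rw [Finset.prod_congr rfl e4, Finset.prod_const, Finset.card_erase_of_mem hx]
    rw [e2, e3]
  calc S.card * ((r - 1) ^ (S.card - 1) * r ^ (m - S.card))
      = ∑ x ∈ S, (G x).card := by
        rw [Finset.sum_congr rfl hcardG, Finset.sum_const, smul_eq_mul]
    _ = (S.biUnion G).card := by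
        rw [Finset.card_biUnion]
        intro x hx y hy hxy
        simp only [Finset.disjoint_left]
        intro g hgx hgy
        rw [hmem x hx g] at hgx
        rw [hmem y hy g] at hgy
        exact hgy.2 x hx hxy hgx.1
    _ ≤ _ := Finset.card_le_card hsub

lemma good_count_numeric (m a s : ℕ) (ha : 1 ≤ a) (has : a ≤ s) (hs2 : s ≤ 2 * a)
    (hsm : s ≤ m) :
    (2 * a) ^ m ≤ 8 * (s * (((2 * a) - 1) ^ (s - 1) * (2 * a) ^ (m - s))) := by
  set r := 2 * a with hrdef
  have hr : 2 ≤ r := by omega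
  have key : r ^ s ≤ 8 * (s * (r - 1) ^ (s - 1)) := by
    have h4 : r ^ (s - 1) ≤ 4 * (r - 1) ^ (s - 1) := by
      have := nat_pow_succ_le_four_mul_pow (b := r - 1) (e := s - 1) (by omega) (by omega)
      have hb1 : r - 1 + 1 = r := by omega
      rwa [hb1] at this
    calc r ^ s = r * r ^ (s - 1) := by
          rw [← pow_succ']; congr 1; omega
      _ ≤ r * (4 * (r - 1) ^ (s - 1)) := Nat.mul_le_mul_left _ h4
      _ ≤ (2 * s) * (4 * (r - 1) ^ (s - 1)) := by
          apply Nat.mul_le_mul_right; omega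
      _ = 8 * (s * (r - 1) ^ (s - 1)) := by ring
  calc r ^ m = r ^ s * r ^ (m - s) := by rw [← pow_add]; congr 1; omega
    _ ≤ (8 * (s * (r - 1) ^ (s - 1))) * r ^ (m - s) := Nat.mul_le_mul_right _ key
    _ = 8 * (s * ((r - 1) ^ (s - 1) * r ^ (m - s))) := by ring

lemma class_exists (m a n : ℕ) (ha : 1 ≤ a)
    (hn : ((Finset.univ.filter
        (fun S : Finset (Fin m) => a ≤ S.card ∧ S.card ≤ 2 * a)).card) * 7 ^ n < 8 ^ n) :
    ∃ F : Finset (Finset (Fin m)), F.card ≤ n ∧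
      ∀ S : Finset (Fin m), a ≤ S.card → S.card ≤ 2 * a →
        ∃ T ∈ F, (T ∩ S).card = 1 := by
  classical
  set r := 2 * a with hrdef
  have hr : 2 ≤ r := by omega
  haveI : NeZero r := ⟨by omega⟩
  set z : Fin r := ⟨0, by omega⟩ with hz
  set 𝒮 := Finset.univ.filter
      (fun S : Finset (Fin m) => a ≤ S.card ∧ S.card ≤ 2 * a) with h𝒮
  -- the sets extracted from a tuple of functions
  set Tset : (Fin m → Fin r) → Finset (Fin m) := fun g => Finset.univ.filter (fun x => g x = z)
    with hT
  -- failure set for a single S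
  set Fail : Finset (Fin m) → Finset (Fin m → Fin r) := fun S =>
    Finset.univ.filter (fun g => ¬ (S.filter fun x => g x = z).card = 1) with hFail
  have hFailcard : ∀ S ∈ 𝒮, 8 * (Fail S).card ≤ 7 * r ^ m := by
    intro S hS
    simp only [h𝒮, mem_filter] at hS
    have hg := good_count m r z S
    have hnum := good_count_numeric m a S.card ha hS.2.1 hS.2.2 (by
      simpa using S.card_le_univ.trans_eq (by simp))
    have hsplit := Finset.card_filter_add_card_filter_not
      (s := (Finset.univ : Finset (Fin m → Fin r)))
      (p := fun g => (S.filter fun x => g x = z).card = 1)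
    have hcu : (Finset.univ : Finset (Fin m → Fin r)).card = r ^ m := by
      simp [Finset.card_univ, Fintype.card_pi]
    rw [hcu] at hsplit
    have hFS : (Fail S).card =
        (Finset.univ.filter (fun g : Fin m → Fin r =>
          ¬ (S.filter fun x => g x = z).card = 1)).card := rfl
    rw [← hrdef] at hnum
    have hGood := hnum.trans (Nat.mul_le_mul_left 8 hg)
    rw [hFS]
    revert hsplit hGood
    generalize (Finset.univ.filter
      (fun g : Fin m → Fin r => (S.filter fun x => g x = z).card = 1)).card = cg
    generalize (Finset.univ.filter
      (fun g : Fin m → Fin r => ¬ (S.filter fun x => g x = z).card = 1)).card = cf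
    intro h1 h2
    clear hg hnum hFS hcu
    omega
  -- bad tuples
  set Bad : Finset (Fin m) → Finset (Fin n → Fin m → Fin r) := fun S =>
    Fintype.piFinset (fun _ => Fail S) with hBad
  have hBadcard : ∀ S ∈ 𝒮, 8 ^ n * (Bad S).card ≤ 7 ^ n * (r ^ m) ^ n := by
    intro S hS
    rw [hBad]
    simp only [Fintype.card_piFinset, Finset.prod_const, Finset.card_univ, Fintype.card_fin]
    calc 8 ^ n * (Fail S).card ^ n = (8 * (Fail S).card) ^ n := by rw [mul_pow]
      _ ≤ (7 * r ^ m) ^ n := Nat.pow_le_pow_left (hFailcard S hS) n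
      _ = 7 ^ n * (r ^ m) ^ n := by rw [mul_pow]
  -- union bound
  have hunion : (𝒮.biUnion Bad).card < (r ^ m) ^ n := by
    have h1 : (𝒮.biUnion Bad).card ≤ ∑ S ∈ 𝒮, (Bad S).card := Finset.card_biUnion_le
    have h2 : 8 ^ n * ∑ S ∈ 𝒮, (Bad S).card ≤ 𝒮.card * (7 ^ n * (r ^ m) ^ n) := by
      rw [Finset.mul_sum]
      calc ∑ S ∈ 𝒮, 8 ^ n * (Bad S).card ≤ ∑ S ∈ 𝒮, 7 ^ n * (r ^ m) ^ n :=
            Finset.sum_le_sum hBadcard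
        _ = 𝒮.card * (7 ^ n * (r ^ m) ^ n) := by rw [Finset.sum_const, smul_eq_mul]
    have h3 : 𝒮.card * (7 ^ n * (r ^ m) ^ n) < 8 ^ n * (r ^ m) ^ n := by
      have hrm : 0 < (r ^ m) ^ n := by positivity
      calc 𝒮.card * (7 ^ n * (r ^ m) ^ n) = (𝒮.card * 7 ^ n) * (r ^ m) ^ n := by ring
        _ < 8 ^ n * (r ^ m) ^ n := (Nat.mul_lt_mul_right hrm).2 hn
    have h8 : 0 < 8 ^ n := by positivity
    nlinarith [Nat.mul_le_mul_left (8 ^ n) h1]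
  -- there is a tuple avoiding all bad sets
  have : ∃ ω : Fin n → Fin m → Fin r, ω ∉ 𝒮.biUnion Bad := by
    by_contra h
    push_neg at h
    have : (Finset.univ : Finset (Fin n → Fin m → Fin r)) ⊆ 𝒮.biUnion Bad :=
      fun ω _ => h ω
    have hle := Finset.card_le_card this
    have hcu : (Finset.univ : Finset (Fin n → Fin m → Fin r)).card = (r ^ m) ^ n := by
      simp [Finset.card_univ, Fintype.card_pi]
    omega
  obtain ⟨ω, hω⟩ := this
  refine ⟨Finset.image (fun i => Tset (ω i)) Finset.univ, ?_, ?_⟩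
  · exact (Finset.card_image_le).trans (by simp)
  · intro S h1 h2
    have hS𝒮 : S ∈ 𝒮 := by simp [h𝒮, h1, h2]; omega
    rw [Finset.mem_biUnion] at hω
    push_neg at hω
    have := hω S hS𝒮
    rw [hBad, Fintype.mem_piFinset] at this
    push_neg at this
    obtain ⟨i, hi⟩ := this
    rw [hFail] at hi
    simp only [mem_filter, mem_univ, true_and, not_not] at hi
    refine ⟨Tset (ω i), Finset.mem_image_of_mem _ (Finset.mem_univ i), ?_⟩
    have : Tset (ω i) ∩ S = S.filter (fun x => ω i x = z) := by
      ext x; simp [hT, Finset.mem_filter, and_comm]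
    rw [this, hi]

lemma pow_self_le_four_pow_mul_factorial (s : ℕ) : s ^ s ≤ 4 ^ s * s.factorial := by
  induction s with
  | zero => simp
  | succ s ih =>
    rcases Nat.eq_zero_or_pos s with rfl | hs
    · simp
    calc (s + 1) ^ (s + 1) = (s + 1) * (s + 1) ^ s := by rw [pow_succ']
      _ ≤ (s + 1) * (4 * s ^ s) := Nat.mul_le_mul_left _ (nat_pow_succ_le_four_mul_pow hs le_rfl)
      _ ≤ (s + 1) * (4 * (4 ^ s * s.factorial)) := by
          apply Nat.mul_le_mul_left
          exact Nat.mul_le_mul_left _ ih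
      _ = 4 ^ (s + 1) * ((s + 1) * s.factorial) := by ring
      _ = 4 ^ (s + 1) * (s + 1).factorial := by rw [Nat.factorial_succ]

lemma choose_bound (m a s : ℕ) (has : a ≤ s) (hs2 : s ≤ 2 * a) (ham : a ≤ m) :
    a ^ (2 * a) * m.choose s ≤ (4 * m) ^ (2 * a) := by
  have h1 : s.factorial * m.choose s ≤ m ^ s := by
    rw [← Nat.descFactorial_eq_factorial_mul_choose]
    exact Nat.descFactorial_le_pow m s
  have h2 : s ^ s * m.choose s ≤ 4 ^ s * m ^ s := by
    calc s ^ s * m.choose s ≤ (4 ^ s * s.factorial) * m.choose s :=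
          Nat.mul_le_mul_right _ (pow_self_le_four_pow_mul_factorial s)
      _ = 4 ^ s * (s.factorial * m.choose s) := by ring
      _ ≤ 4 ^ s * m ^ s := Nat.mul_le_mul_left _ h1
  have h3 : a ^ s * m.choose s ≤ 4 ^ s * m ^ s :=
    le_trans (Nat.mul_le_mul_right _ (Nat.pow_le_pow_left has s)) h2
  calc a ^ (2 * a) * m.choose s = a ^ (2 * a - s) * (a ^ s * m.choose s) := by
        rw [← mul_assoc, ← pow_add]
        congr 2
        omega
    _ ≤ m ^ (2 * a - s) * (4 ^ s * m ^ s) :=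
        Nat.mul_le_mul (Nat.pow_le_pow_left ham _) h3
    _ ≤ (4 * m) ^ (2 * a - s) * (4 ^ s * m ^ s) := by
        apply Nat.mul_le_mul_right
        exact Nat.pow_le_pow_left (by omega) _
    _ = 4 ^ (2 * a - s) * 4 ^ s * (m ^ (2 * a - s) * m ^ s) := by rw [mul_pow]; ring
    _ = 4 ^ (2 * a) * m ^ (2 * a) := by rw [← pow_add, ← pow_add]; congr 2 <;> omega
    _ = (4 * m) ^ (2 * a) := by rw [mul_pow]

lemma class_count_bound (m j : ℕ) (hm : 1 ≤ m) (hj : j ≤ Nat.log 2 m) :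
    ((Finset.univ.filter
        (fun S : Finset (Fin m) => 2 ^ j ≤ S.card ∧ S.card ≤ 2 * 2 ^ j)).card)
      * 7 ^ (6 * (2 ^ j * (2 * (Nat.log 2 m - j) + 10)))
      < 8 ^ (6 * (2 ^ j * (2 * (Nat.log 2 m - j) + 10))) := by
  classical
  set a := 2 ^ j with hadef
  set Lm := Nat.log 2 m with hLm
  set t := a * (2 * (Lm - j) + 10) with ht
  have ha : 1 ≤ a := Nat.one_le_two_pow
  have ham : a ≤ m := by
    calc a = 2 ^ j := rfl
      _ ≤ 2 ^ Lm := Nat.pow_le_pow_right (by norm_num) hj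
      _ ≤ m := Nat.pow_log_le_self 2 (by omega)
  -- step 1 : card bound via sum of binomial coefficients
  have hsub : (Finset.univ.filter
      (fun S : Finset (Fin m) => a ≤ S.card ∧ S.card ≤ 2 * a)) ⊆
      (Finset.Icc a (2 * a)).biUnion (fun s => Finset.powersetCard s Finset.univ) := by
    intro S hS
    simp only [mem_filter, mem_univ, true_and] at hS
    rw [mem_biUnion]
    exact ⟨S.card, by simp [Finset.mem_Icc, hS.1, hS.2],
      by rw [Finset.mem_powersetCard]; exact ⟨Finset.subset_univ S, rfl⟩⟩
  have hcard1 : (Finset.univ.filter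
      (fun S : Finset (Fin m) => a ≤ S.card ∧ S.card ≤ 2 * a)).card ≤
      ∑ s ∈ Finset.Icc a (2 * a), m.choose s := by
    calc _ ≤ ((Finset.Icc a (2 * a)).biUnion
          (fun s => Finset.powersetCard s Finset.univ)).card := Finset.card_le_card hsub
      _ ≤ ∑ s ∈ Finset.Icc a (2 * a), (Finset.powersetCard s (Finset.univ : Finset (Fin m))).card :=
          Finset.card_biUnion_le
      _ = ∑ s ∈ Finset.Icc a (2 * a), m.choose s := by
          apply Finset.sum_congr rfl
          intro s _
          rw [Finset.card_powersetCard, Finset.card_univ, Fintype.card_fin]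
  -- step 2 : the sum is at most (a+1)(4m)^{2a} after multiplying by a^{2a}
  have hcard2 : a ^ (2 * a) * (Finset.univ.filter
      (fun S : Finset (Fin m) => a ≤ S.card ∧ S.card ≤ 2 * a)).card ≤
      (a + 1) * (4 * m) ^ (2 * a) := by
    calc a ^ (2 * a) * _ ≤ a ^ (2 * a) * ∑ s ∈ Finset.Icc a (2 * a), m.choose s :=
          Nat.mul_le_mul_left _ hcard1
      _ = ∑ s ∈ Finset.Icc a (2 * a), a ^ (2 * a) * m.choose s := by rw [Finset.mul_sum]
      _ ≤ ∑ s ∈ Finset.Icc a (2 * a), (4 * m) ^ (2 * a) := by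
          apply Finset.sum_le_sum
          intro s hs
          rw [Finset.mem_Icc] at hs
          exact choose_bound m a s hs.1 hs.2 ham
      _ = (Finset.Icc a (2 * a)).card * (4 * m) ^ (2 * a) := by
          rw [Finset.sum_const, smul_eq_mul]
      _ = (a + 1) * (4 * m) ^ (2 * a) := by
          rw [Nat.card_Icc]
          congr 1
          omega
  -- step 3 : powers of two
  have hm2 : 4 * m < 2 ^ (Lm + 3) := by
    have h0 := Nat.lt_pow_succ_log_self (b := 2) (by norm_num) m
    have h8 : (2:ℕ) ^ (Lm + 3) = 8 * 2 ^ Lm := by ring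
    have h2 : (2:ℕ) ^ (Nat.log 2 m).succ = 2 * 2 ^ Lm := by rw [hLm, pow_succ]; ring
    omega
  have hstep : (a + 1) * (4 * m) ^ (2 * a) < 2 ^ t * a ^ (2 * a) := by
    have h1 : (4 * m) ^ (2 * a) < (2 ^ (Lm + 3)) ^ (2 * a) :=
      Nat.pow_lt_pow_left hm2 (by omega)
    have h2 : a + 1 ≤ 2 ^ (a + 1) := le_of_lt Nat.lt_two_pow_self
    have h3 : (a + 1) * (4 * m) ^ (2 * a) < 2 ^ (a + 1) * (2 ^ (Lm + 3)) ^ (2 * a) := by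
      calc (a + 1) * (4 * m) ^ (2 * a) < (a + 1) * (2 ^ (Lm + 3)) ^ (2 * a) := by
            apply Nat.mul_lt_mul_left (by omega) |>.2 h1
        _ ≤ 2 ^ (a + 1) * (2 ^ (Lm + 3)) ^ (2 * a) := Nat.mul_le_mul_right _ h2
    have h4 : 2 ^ (a + 1) * ((2:ℕ) ^ (Lm + 3)) ^ (2 * a) = 2 ^ ((a + 1) + (Lm + 3) * (2 * a)) := by
      rw [← pow_mul, ← pow_add]
    have h5 : 2 ^ t * a ^ (2 * a) = 2 ^ (t + j * (2 * a)) := by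
      rw [hadef, ← pow_mul, ← pow_add]
    have h6 : (a + 1) + (Lm + 3) * (2 * a) ≤ t + j * (2 * a) := by
      rw [ht]
      have hd : Lm = j + (Lm - j) := by omega
      set d := Lm - j
      rw [hd]
      nlinarith [ha]
    calc (a + 1) * (4 * m) ^ (2 * a) < 2 ^ ((a + 1) + (Lm + 3) * (2 * a)) := by
          rw [← h4]; exact h3
      _ ≤ 2 ^ (t + j * (2 * a)) := Nat.pow_le_pow_right (by norm_num) h6
      _ = 2 ^ t * a ^ (2 * a) := h5.symm
  have hScard : (Finset.univ.filter
      (fun S : Finset (Fin m) => a ≤ S.card ∧ S.card ≤ 2 * a)).card < 2 ^ t := by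
    have := lt_of_le_of_lt hcard2 hstep
    have hpos : 0 < a ^ (2 * a) := by positivity
    by_contra h
    push_neg at h
    have : 2 ^ t * a ^ (2 * a) ≤ a ^ (2 * a) * (Finset.univ.filter
        (fun S : Finset (Fin m) => a ≤ S.card ∧ S.card ≤ 2 * a)).card := by
      calc 2 ^ t * a ^ (2 * a) ≤ (Finset.univ.filter
            (fun S : Finset (Fin m) => a ≤ S.card ∧ S.card ≤ 2 * a)).card * a ^ (2 * a) :=
            Nat.mul_le_mul_right _ h
        _ = _ := by ring
    omega
  -- step 4 : conclude
  calc (Finset.univ.filter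
        (fun S : Finset (Fin m) => a ≤ S.card ∧ S.card ≤ 2 * a)).card * 7 ^ (6 * t)
      < 2 ^ t * 7 ^ (6 * t) := Nat.mul_lt_mul_right (by positivity) |>.2 hScard
    _ = (2 * 7 ^ 6) ^ t := by rw [mul_pow, ← pow_mul, mul_comm 6 t]
    _ ≤ (8 ^ 6) ^ t := Nat.pow_le_pow_left (by norm_num) t
    _ = 8 ^ (6 * t) := by rw [← pow_mul, mul_comm 6 t]

lemma two_pow_sum (n : ℕ) : ∑ j ∈ Finset.range n, 2 ^ j = 2 ^ n - 1 := by
  induction n with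
  | zero => simp
  | succ n ih =>
    rw [Finset.sum_range_succ, ih]
    have : 1 ≤ 2 ^ n := Nat.one_le_two_pow
    have : (2:ℕ) ^ (n+1) = 2 * 2 ^ n := by ring
    omega

lemma weighted_sum (J : ℕ) :
    ∑ j ∈ Finset.range (J + 1), 2 ^ j * (J - j) + (J + 2) = 2 ^ (J + 1) := by
  induction J with
  | zero => simp
  | succ J ih =>
    have step : ∑ j ∈ Finset.range (J + 2), 2 ^ j * (J + 1 - j)
        = ∑ j ∈ Finset.range (J + 1), 2 ^ j * (J - j) + ∑ j ∈ Finset.range (J + 1), 2 ^ j := by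
      rw [Finset.sum_range_succ (n := J + 1)]
      have : 2 ^ (J + 1) * (J + 1 - (J + 1)) = 0 := by simp
      rw [this, add_zero, ← Finset.sum_add_distrib]
      apply Finset.sum_congr rfl
      intro j hj
      rw [Finset.mem_range] at hj
      have : J + 1 - j = (J - j) + 1 := by omega
      rw [this]
      ring
    rw [step, two_pow_sum]
    have h1 : 1 ≤ (2:ℕ) ^ (J + 1) := Nat.one_le_two_pow
    have h2 : (2:ℕ) ^ (J + 2) = 2 * 2 ^ (J + 1) := by ring
    omega

lemma main_fin (k m : ℕ) (hk : 1 ≤ k) (hkm : k ≤ m) :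
    ∃ F : Finset (Finset (Fin m)),
      F.card ≤ 2 * k * (12 * (Nat.log 2 m - Nat.log 2 k) + 72) ∧
      ∀ S : Finset (Fin m), S.Nonempty → S.card ≤ k → ∃ T ∈ F, (T ∩ S).card = 1 := by
  classical
  set J := Nat.log 2 k with hJ
  set Lm := Nat.log 2 m with hLm
  have hJL : J ≤ Lm := Nat.log_mono_right hkm
  have hm : 1 ≤ m := hk.trans hkm
  set n : ℕ → ℕ := fun j => 6 * (2 ^ j * (2 * (Lm - j) + 10)) with hn
  have hcl : ∀ j : ℕ, j ≤ J → ∃ F : Finset (Finset (Fin m)), F.card ≤ n j ∧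
      ∀ S : Finset (Fin m), 2 ^ j ≤ S.card → S.card ≤ 2 * 2 ^ j →
        ∃ T ∈ F, (T ∩ S).card = 1 := by
    intro j hj
    exact class_exists m (2 ^ j) (n j) Nat.one_le_two_pow
      (class_count_bound m j hm (hj.trans hJL))
  choose! Ffun hF1 hF2 using hcl
  refine ⟨(Finset.range (J + 1)).biUnion Ffun, ?_, ?_⟩
  · -- cardinality
    calc ((Finset.range (J + 1)).biUnion Ffun).card
        ≤ ∑ j ∈ Finset.range (J + 1), (Ffun j).card := Finset.card_biUnion_le
      _ ≤ ∑ j ∈ Finset.range (J + 1), n j := by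
          apply Finset.sum_le_sum
          intro j hj
          rw [Finset.mem_range] at hj
          exact hF1 j (by omega)
      _ ≤ 2 * k * (12 * (Lm - J) + 72) := by
          have hterm : ∀ j ∈ Finset.range (J + 1),
              n j ≤ 2 ^ j * (12 * (Lm - J) + 60) + 12 * (2 ^ j * (J - j)) := by
            intro j hj
            rw [Finset.mem_range] at hj
            have hdec : Lm - j = (Lm - J) + (J - j) := by omega
            rw [hn]
            simp only []
            rw [hdec]
            ring_nf
            omega
          calc ∑ j ∈ Finset.range (J + 1), n j
              ≤ ∑ j ∈ Finset.range (J + 1),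
                  (2 ^ j * (12 * (Lm - J) + 60) + 12 * (2 ^ j * (J - j))) :=
                Finset.sum_le_sum hterm
            _ = (∑ j ∈ Finset.range (J + 1), 2 ^ j) * (12 * (Lm - J) + 60)
                + 12 * ∑ j ∈ Finset.range (J + 1), 2 ^ j * (J - j) := by
                rw [Finset.sum_add_distrib, Finset.sum_mul, Finset.mul_sum]
            _ ≤ 2 ^ (J + 1) * (12 * (Lm - J) + 60) + 12 * 2 ^ (J + 1) := by
                have h1 := two_pow_sum (J + 1)
                have h2 := weighted_sum J
                have h3 : ∑ j ∈ Finset.range (J + 1), 2 ^ j ≤ 2 ^ (J + 1) := by omega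
                have h4 : ∑ j ∈ Finset.range (J + 1), 2 ^ j * (J - j) ≤ 2 ^ (J + 1) := by omega
                exact Nat.add_le_add (Nat.mul_le_mul_right _ h3) (Nat.mul_le_mul_left _ h4)
            _ = 2 ^ (J + 1) * (12 * (Lm - J) + 72) := by ring
            _ ≤ 2 * k * (12 * (Lm - J) + 72) := by
                apply Nat.mul_le_mul_right
                have : 2 ^ J ≤ k := Nat.pow_log_le_self 2 (by omega)
                calc (2:ℕ) ^ (J + 1) = 2 * 2 ^ J := by ring
                  _ ≤ 2 * k := by omega
  · -- selectivity
    intro S hS hSk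
    have hc : S.card ≠ 0 := by
      simpa [Finset.card_eq_zero] using hS.ne_empty
    set j := Nat.log 2 S.card with hj
    have hjJ : j ≤ J := Nat.log_mono_right hSk
    have h1 : 2 ^ j ≤ S.card := Nat.pow_log_le_self 2 hc
    have h2 : S.card ≤ 2 * 2 ^ j := by
      have := Nat.lt_pow_succ_log_self (b := 2) (by norm_num) S.card
      have he : (2:ℕ) ^ (Nat.log 2 S.card).succ = 2 * 2 ^ j := by rw [hj, pow_succ]; ring
      omega
    obtain ⟨T, hT, hTS⟩ := hF2 j hjJ S h1 h2
    exact ⟨T, Finset.mem_biUnion.2 ⟨j, Finset.mem_range.2 (by omega), hT⟩, hTS⟩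

/-- There is an absolute constant `C > 0` such that for all integers `1 ≤ k ≤ m`
there exists a `(k,m)`-selective family `F` of subsets of `{1,…,m}` with
`|F| ≤ C·k·(1 + log (m/k))`: for every nonempty `S ⊆ {1,…,m}` with `|S| ≤ k`
there is `T ∈ F` with `|T ∩ S| = 1`. -/
theorem selective_family_exists :
    ∃ C : ℝ, 0 < C ∧
      ∀ k m : ℕ, 1 ≤ k → k ≤ m →
        ∃ F : Finset (Finset ℕ),
          (∀ T ∈ F, T ⊆ Finset.Icc 1 m) ∧
          (F.card : ℝ) ≤ C * k * (1 + Real.log ((m : ℝ) / (k : ℝ))) ∧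
          (∀ S : Finset ℕ, S ⊆ Finset.Icc 1 m → S.Nonempty → S.card ≤ k →
            ∃ T ∈ F, (T ∩ S).card = 1) := by
  classical
  refine ⟨400, by norm_num, ?_⟩
  intro k m hk hkm
  obtain ⟨F', hF'card, hF'sel⟩ := main_fin k m hk hkm
  set emb : Fin m → ℕ := fun i => (i : ℕ) + 1 with hemb
  have hinj : Function.Injective emb := by
    intro i j h
    simp only [hemb] at h
    exact Fin.ext (by omega)
  refine ⟨F'.image (fun T => T.image emb), ?_, ?_, ?_⟩
  · -- subsets of Icc 1 m
    intro T hT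
    rw [Finset.mem_image] at hT
    obtain ⟨T', _, rfl⟩ := hT
    intro x hx
    rw [Finset.mem_image] at hx
    obtain ⟨i, _, rfl⟩ := hx
    simp only [hemb, Finset.mem_Icc]
    omega
  · -- cardinality
    have hcard : (F'.image (fun T => T.image emb)).card ≤
        2 * k * (12 * (Nat.log 2 m - Nat.log 2 k) + 72) :=
      le_trans Finset.card_image_le hF'card
    set d := Nat.log 2 m - Nat.log 2 k with hd
    have hk0 : (0:ℝ) < k := by exact_mod_cast hk
    have hm0 : (0:ℝ) < m := by
      have : 1 ≤ m := hk.trans hkm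
      exact_mod_cast this
    have hlog0 : 0 ≤ Real.log ((m:ℝ) / k) := by
      apply Real.log_nonneg
      rw [le_div_iff₀ hk0]
      simpa using (by exact_mod_cast hkm : (k:ℝ) ≤ m)
    have hdlog : (d : ℝ) ≤ 2 * Real.log ((m:ℝ) / k) + 1 := by
      rcases Nat.eq_zero_or_pos d with h0 | hpos
      · rw [h0]; push_cast; linarith
      · -- k * 2^(d-1) ≤ m
        have hnat : k * 2 ^ (d - 1) ≤ m := by
          have h1 : k < 2 ^ (Nat.log 2 k + 1) :=
            Nat.lt_pow_succ_log_self (by norm_num) k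
          have h2 : 2 ^ (Nat.log 2 m) ≤ m :=
            Nat.pow_log_le_self 2 (by omega)
          have h3 : Nat.log 2 k ≤ Nat.log 2 m := Nat.log_mono_right hkm
          have h4 : Nat.log 2 m = Nat.log 2 k + 1 + (d - 1) := by omega
          calc k * 2 ^ (d - 1) ≤ (2 ^ (Nat.log 2 k + 1) - 1) * 2 ^ (d - 1) := by
                apply Nat.mul_le_mul_right; omega
            _ = 2 ^ (Nat.log 2 k + 1) * 2 ^ (d - 1) - 2 ^ (d - 1) := by
                rw [Nat.sub_mul, one_mul]
            _ = 2 ^ (Nat.log 2 m) - 2 ^ (d - 1) := by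
                conv_rhs => rw [h4, pow_add]
            _ ≤ m := le_trans (Nat.sub_le _ _) h2
        have hreal : (2:ℝ) ^ (d - 1) ≤ (m:ℝ) / k := by
          rw [le_div_iff₀ hk0]
          calc (2:ℝ) ^ (d-1) * k = k * 2 ^ (d-1) := by ring
            _ ≤ m := by exact_mod_cast hnat
        have hlog2 : ((d:ℝ) - 1) * Real.log 2 ≤ Real.log ((m:ℝ)/k) := by
          have := Real.log_le_log (by positivity) hreal
          rw [Real.log_pow] at this
          have hcast : ((d - 1 : ℕ) : ℝ) = (d:ℝ) - 1 := by
            have : 1 ≤ d := hpos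
            push_cast [this]
            ring
          rw [hcast] at this
          linarith [this]
        have hl2 : (0.6931471803:ℝ) < Real.log 2 := Real.log_two_gt_d9
        have hd1 : (0:ℝ) ≤ (d:ℝ) - 1 := by
          have : 1 ≤ d := hpos
          have : (1:ℝ) ≤ d := by exact_mod_cast this
          linarith
        nlinarith
    calc ((F'.image (fun T => T.image emb)).card : ℝ)
        ≤ 2 * k * (12 * (d:ℝ) + 72) := by
          have := hcard
          have : ((F'.image (fun T => T.image emb)).card : ℝ) ≤
              ((2 * k * (12 * d + 72) : ℕ) : ℝ) := by exact_mod_cast this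
          calc ((F'.image (fun T => T.image emb)).card : ℝ)
              ≤ ((2 * k * (12 * d + 72) : ℕ) : ℝ) := this
            _ = 2 * k * (12 * (d:ℝ) + 72) := by push_cast; ring
      _ ≤ 2 * k * (12 * (2 * Real.log ((m:ℝ)/k) + 1) + 72) := by
          apply mul_le_mul_of_nonneg_left _ (by positivity)
          linarith
      _ ≤ 400 * k * (1 + Real.log ((m:ℝ)/k)) := by nlinarith
  · -- selectivity
    intro S hSsub hSne hSk
    set S' : Finset (Fin m) := Finset.univ.filter (fun i => emb i ∈ S) with hS'
    have himg : S'.image emb = S := by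
      ext x
      simp only [Finset.mem_image, hS', Finset.mem_filter, Finset.mem_univ, true_and]
      constructor
      · rintro ⟨i, hi, rfl⟩; exact hi
      · intro hx
        have hmem := hSsub hx
        rw [Finset.mem_Icc] at hmem
        have hxe : x - 1 + 1 = x := by omega
        refine ⟨⟨x - 1, by omega⟩, ?_, hxe⟩
        show x - 1 + 1 ∈ S
        rw [hxe]
        exact hx
    have hcardeq : S'.card = S.card := by
      conv_rhs => rw [← himg]
      rw [Finset.card_image_of_injective _ hinj]
    have hS'ne : S'.Nonempty := by
      rw [← Finset.card_pos, hcardeq, Finset.card_pos]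
      exact hSne
    obtain ⟨T', hT'F, hT'⟩ := hF'sel S' hS'ne (by omega)
    refine ⟨T'.image emb, Finset.mem_image_of_mem _ hT'F, ?_⟩
    rw [← himg, ← Finset.image_inter _ _ hinj, Finset.card_image_of_injective _ hinj, hT']
end

section
/- For all positive integers k ≤ m there exists a (k,m)-strongly selective family of size O(k² · log(m/k)); precisely, there is an absolute constant C > 0 such that for all integers 1 ≤ k ≤ m there exists a family F of subsets of {1,…,m} with |F| ≤ C · k² · (1 + Real.log (m / k)) such that for every subset S ⊆ {1,…,m} with |S| ≤ k and every element z ∈ S there exists T ∈ F with T ∩ S = {z}. -/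
open Finset

/-- Number of functions agreeing at two distinct points. -/
lemma card_agree {α : Type*} [Fintype α] [DecidableEq α] {K : ℕ} {s z : α} (hsz : s ≠ z) :
    (Finset.univ.filter (fun h : α → Fin K => h s = h z)).card
      = K ^ (Fintype.card α - 1) := by
  have hzs : z ≠ s := hsz.symm
  rw [← Fintype.card_subtype]
  have e : {h : α → Fin K // h s = h z} ≃ ({t : α // t ≠ s} → Fin K) :=
    { toFun := fun h t => h.1 t
      invFun := fun f => ⟨fun t => if ht : t = s then f ⟨z, hzs⟩ else f ⟨t, ht⟩, by
        simp [hzs]⟩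
      left_inv := by
        intro h
        ext t
        by_cases ht : t = s
        · subst ht; simp [h.2]
        · simp [ht]
      right_inv := by
        intro f
        ext t
        simp [t.2] }
  have hc : Fintype.card {t : α // t ≠ s} = Fintype.card α - 1 := by
    rw [Fintype.card_subtype_compl, Fintype.card_subtype_eq]
  rw [Fintype.card_congr e, Fintype.card_fun, Fintype.card_fin, hc]

lemma core_selective (α : Type*) [Fintype α] [DecidableEq α] (k : ℕ) (hk : 1 ≤ k)
    (hkn : k ≤ Fintype.card α) :
    ∃ N : ℕ, N ≤ (k + 1) * (Nat.log 2 (Fintype.card α) + 2) ∧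
      ∃ g : Fin N → α → Fin (2 * k),
        ∀ S : Finset α, S.card ≤ k → ∀ z ∈ S, ∃ i : Fin N,
          ∀ s ∈ S, s ≠ z → g i s ≠ g i z := by
  classical
  set n := Fintype.card α with hn
  have hn1 : 1 ≤ n := le_trans hk hkn
  set N := (k + 1) * (Nat.log 2 n + 2) with hNdef
  refine ⟨N, le_rfl, ?_⟩
  by_contra hcon
  push_neg at hcon
  set K := 2 * k with hK
  have hK2 : 2 ≤ K := by omega
  set badF : Finset α → α → Finset (α → Fin K) :=
    fun S z => Finset.univ.filter (fun h => ∃ s ∈ S, s ≠ z ∧ h s = h z) with hbadF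
  set P : Finset (Finset α) := Finset.univ.filter (fun S : Finset α => S.card ≤ k) with hP
  -- every g lies in some bad set
  have hcover : (Finset.univ : Finset (Fin N → α → Fin K)) ⊆
      P.biUnion (fun S => S.biUnion (fun z =>
        Fintype.piFinset (fun _ : Fin N => badF S z))) := by
    intro g _
    obtain ⟨S, hScard, z, hzS, hbad⟩ := hcon g
    refine Finset.mem_biUnion.2 ⟨S, by simp [hP, hScard], ?_⟩
    refine Finset.mem_biUnion.2 ⟨z, hzS, ?_⟩
    rw [Fintype.mem_piFinset]
    intro i
    obtain ⟨s, hs, hsz, he⟩ := hbad i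
    simp only [hbadF, Finset.mem_filter, Finset.mem_univ, true_and]
    exact ⟨s, hs, hsz, he⟩
  -- cardinality of each bad set
  have hbadcard : ∀ S : Finset α, S.card ≤ k → ∀ z ∈ S,
      (badF S z).card ≤ k * K ^ (n - 1) := by
    intro S hS z hz
    have hsub : badF S z ⊆ (S.erase z).biUnion
        (fun s => Finset.univ.filter (fun h : α → Fin K => h s = h z)) := by
      intro h hh
      simp only [hbadF, Finset.mem_filter, Finset.mem_univ, true_and] at hh
      obtain ⟨s, hs, hsz, he⟩ := hh
      exact Finset.mem_biUnion.2 ⟨s, Finset.mem_erase.2 ⟨hsz, hs⟩,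
        Finset.mem_filter.2 ⟨Finset.mem_univ _, he⟩⟩
    calc (badF S z).card ≤ _ := Finset.card_le_card hsub
      _ ≤ ∑ s ∈ S.erase z,
          (Finset.univ.filter (fun h : α → Fin K => h s = h z)).card :=
        Finset.card_biUnion_le
      _ = ∑ s ∈ S.erase z, K ^ (n - 1) := by
        refine Finset.sum_congr rfl fun s hs => ?_
        exact card_agree (Finset.mem_erase.1 hs).1
      _ = (S.erase z).card * K ^ (n - 1) := by
        rw [Finset.sum_const, smul_eq_mul]
      _ ≤ k * K ^ (n - 1) := by
        have : (S.erase z).card ≤ k := le_trans (Finset.card_erase_le) hS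
        exact Nat.mul_le_mul_right _ this
  -- cardinality of P
  have hPcard : P.card ≤ (k + 1) * n ^ k := by
    have hsub : P ⊆ (Finset.range (k + 1)).biUnion
        (fun j => Finset.powersetCard j Finset.univ) := by
      intro S hS
      simp only [hP, Finset.mem_filter] at hS
      refine Finset.mem_biUnion.2 ⟨S.card, Finset.mem_range.2 (by omega), ?_⟩
      rw [Finset.mem_powersetCard]
      exact ⟨Finset.subset_univ _, rfl⟩
    calc P.card ≤ _ := Finset.card_le_card hsub
      _ ≤ ∑ j ∈ Finset.range (k + 1), (Finset.powersetCard j (Finset.univ : Finset α)).card :=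
        Finset.card_biUnion_le
      _ ≤ ∑ j ∈ Finset.range (k + 1), n ^ k := by
        refine Finset.sum_le_sum fun j hj => ?_
        rw [Finset.card_powersetCard, Finset.card_univ]
        calc n.choose j ≤ n ^ j := Nat.choose_le_pow n j
          _ ≤ n ^ k := Nat.pow_le_pow_right hn1 (by
              have := Finset.mem_range.1 hj; omega)
      _ = (k + 1) * n ^ k := by rw [Finset.sum_const, Finset.card_range, smul_eq_mul]
  -- main counting chain
  have hmain : K ^ (n * N) ≤ (k + 1) * n ^ k * k * (k * K ^ (n - 1)) ^ N := by
    calc K ^ (n * N) = Fintype.card (Fin N → α → Fin K) := by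
          rw [Fintype.card_fun, Fintype.card_fun, Fintype.card_fin, ← hn,
            ← pow_mul, Fintype.card_fin]
      _ = (Finset.univ : Finset (Fin N → α → Fin K)).card := (Finset.card_univ).symm
      _ ≤ (P.biUnion (fun S => S.biUnion (fun z =>
            Fintype.piFinset (fun _ : Fin N => badF S z)))).card :=
          Finset.card_le_card hcover
      _ ≤ ∑ S ∈ P, (S.biUnion (fun z =>
            Fintype.piFinset (fun _ : Fin N => badF S z))).card := Finset.card_biUnion_le
      _ ≤ ∑ S ∈ P, ∑ z ∈ S, (Fintype.piFinset (fun _ : Fin N => badF S z)).card :=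
          Finset.sum_le_sum fun S _ => Finset.card_biUnion_le
      _ ≤ ∑ S ∈ P, ∑ z ∈ S, (k * K ^ (n - 1)) ^ N := by
          refine Finset.sum_le_sum fun S hS => Finset.sum_le_sum fun z hz => ?_
          have hScard : S.card ≤ k := by
            simpa [hP] using hS
          rw [Fintype.card_piFinset]
          calc ∏ _i : Fin N, (badF S z).card = (badF S z).card ^ N := by
                rw [Finset.prod_const, Finset.card_univ, Fintype.card_fin]
            _ ≤ (k * K ^ (n - 1)) ^ N :=
                Nat.pow_le_pow_left (hbadcard S hScard z hz) N
      _ ≤ ∑ S ∈ P, k * (k * K ^ (n - 1)) ^ N := by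
          refine Finset.sum_le_sum fun S hS => ?_
          rw [Finset.sum_const, smul_eq_mul]
          have hScard : S.card ≤ k := by simpa [hP] using hS
          exact Nat.mul_le_mul_right _ hScard
      _ = P.card * (k * (k * K ^ (n - 1)) ^ N) := by
          rw [Finset.sum_const, smul_eq_mul]
      _ ≤ ((k + 1) * n ^ k) * (k * (k * K ^ (n - 1)) ^ N) :=
          Nat.mul_le_mul_right _ hPcard
      _ = (k + 1) * n ^ k * k * (k * K ^ (n - 1)) ^ N := by ring
  -- simplify: cancel the common positive factor
  have hKn : K ^ (n * N) = 2 ^ N * (k ^ N * (K ^ (n - 1)) ^ N) := by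
    obtain ⟨c, hc⟩ := Nat.exists_eq_add_of_le hn1
    have h1 : n - 1 = c := by omega
    have hsplit : n * N = N + (n - 1) * N := by rw [h1, hc]; ring
    rw [hsplit, pow_add, hK, mul_pow, mul_pow, ← pow_mul]
    ring
  have hsmall : 2 ^ N ≤ (k + 1) * n ^ k * k := by
    have hpos : 0 < k ^ N * (K ^ (n - 1)) ^ N := by positivity
    have := hmain
    rw [hKn, mul_pow] at this
    have h2 : 2 ^ N * (k ^ N * (K ^ (n - 1)) ^ N) ≤
        ((k + 1) * n ^ k * k) * (k ^ N * (K ^ (n - 1)) ^ N) := by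
      calc 2 ^ N * (k ^ N * (K ^ (n - 1)) ^ N) ≤
            (k + 1) * n ^ k * k * (k ^ N * (K ^ (n - 1)) ^ N) := by
              have := hmain; rw [hKn] at this
              calc 2 ^ N * (k ^ N * (K ^ (n - 1)) ^ N) = K ^ (n * N) := hKn.symm
                _ ≤ (k + 1) * n ^ k * k * (k * K ^ (n - 1)) ^ N := hmain
                _ = (k + 1) * n ^ k * k * (k ^ N * (K ^ (n - 1)) ^ N) := by
                    rw [mul_pow]
      _ = ((k + 1) * n ^ k * k) * (k ^ N * (K ^ (n - 1)) ^ N) := rfl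
    exact Nat.le_of_mul_le_mul_right h2 hpos
  -- but 2^N is too big
  have hbig : (k + 1) * n ^ k * k < 2 ^ N := by
    set L := Nat.log 2 n with hL
    have h1 : n + 1 ≤ 2 ^ (L + 1) := Nat.lt_pow_succ_log_self (by norm_num) n
    have h2 : 2 * (n + 1) ≤ 2 ^ (L + 2) := by
      calc 2 * (n + 1) ≤ 2 * 2 ^ (L + 1) := by omega
        _ = 2 ^ (L + 2) := by ring
    have h3 : (2 * (n + 1)) ^ (k + 1) ≤ 2 ^ N := by
      rw [hNdef, pow_mul']
      exact Nat.pow_le_pow_left h2 (k + 1)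
    have h4 : (k + 1) * n ^ k * k < (2 * (n + 1)) ^ (k + 1) := by
      have e1 : (2 * (n + 1)) ^ (k + 1) = 2 ^ (k + 1) * ((n + 1) ^ k * (n + 1)) := by
        rw [mul_pow]; ring
      rw [e1]
      have hnk : n ^ k ≤ (n + 1) ^ k := Nat.pow_le_pow_left (by omega) k
      have hkk : k < 2 ^ (k + 1) := lt_trans (Nat.lt_two_pow_self (n := k)) (by
        exact Nat.pow_lt_pow_right (by norm_num) (by omega))
      have hnn : k + 1 ≤ n + 1 := by omega
      have hnkpos : 0 < n ^ k := Nat.pow_pos (n := k) hn1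
      calc (k + 1) * n ^ k * k = k * (k + 1) * n ^ k := by ring
        _ < 2 ^ (k + 1) * (n + 1) * n ^ k := by
            have hlt : k * (k + 1) < 2 ^ (k + 1) * (n + 1) := by
              calc k * (k + 1) < 2 ^ (k + 1) * (k + 1) :=
                    mul_lt_mul_of_pos_right hkk (by omega)
                _ ≤ 2 ^ (k + 1) * (n + 1) := Nat.mul_le_mul_left _ hnn
            exact mul_lt_mul_of_pos_right hlt hnkpos
        _ ≤ 2 ^ (k + 1) * (n + 1) * (n + 1) ^ k := by
            exact Nat.mul_le_mul_left _ hnk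
        _ = 2 ^ (k + 1) * ((n + 1) ^ k * (n + 1)) := by ring
    omega
  omega

set_option maxHeartbeats 2000000 in
/-- There is an absolute constant `C > 0` such that for all integers `1 ≤ k ≤ m`
there exists a `(k,m)`-strongly selective family `F` of subsets of `{1,…,m}` with
`|F| ≤ C·k²·(1 + log (m/k))`: for every `S ⊆ {1,…,m}` with `|S| ≤ k` and every
`z ∈ S` there is `T ∈ F` with `T ∩ S = {z}`. -/
theorem strongly_selective_family_exists :
    ∃ C : ℝ, 0 < C ∧
      ∀ k m : ℕ, 1 ≤ k → k ≤ m →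
        ∃ F : Finset (Finset ℕ),
          (∀ T ∈ F, T ⊆ Finset.Icc 1 m) ∧
          (F.card : ℝ) ≤ C * (k : ℝ) ^ 2 * (1 + Real.log ((m : ℝ) / (k : ℝ))) ∧
          (∀ S : Finset ℕ, S ⊆ Finset.Icc 1 m → S.card ≤ k →
            ∀ z ∈ S, ∃ T ∈ F, T ∩ S = {z}) := by
  classical
  refine ⟨16, by norm_num, ?_⟩
  intro k m hk hkm
  have hk0 : (0 : ℝ) < k := by exact_mod_cast hk
  have hm0 : (0 : ℝ) < m := by exact_mod_cast lt_of_lt_of_le hk hkm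
  have hlog0 : 0 ≤ Real.log ((m : ℝ) / (k : ℝ)) := by
    apply Real.log_nonneg
    rw [le_div_iff₀ hk0]
    simp only [one_mul]
    exact_mod_cast hkm
  by_cases hcase : m ≤ k * k
  · -- small case: singletons
    refine ⟨(Finset.Icc 1 m).image (fun x => ({x} : Finset ℕ)), ?_, ?_, ?_⟩
    · intro T hT
      obtain ⟨x, hx, rfl⟩ := Finset.mem_image.1 hT
      exact Finset.singleton_subset_iff.2 hx
    · have hcm : ((Finset.Icc 1 m).image (fun x => ({x} : Finset ℕ))).card ≤ m := by
        calc ((Finset.Icc 1 m).image (fun x => ({x} : Finset ℕ))).card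
            ≤ (Finset.Icc 1 m).card := Finset.card_image_le
          _ = m := by rw [Nat.card_Icc]; omega
      have hcm' : (((Finset.Icc 1 m).image (fun x => ({x} : Finset ℕ))).card : ℝ) ≤ m := by
        exact_mod_cast hcm
      have h1 : (m : ℝ) ≤ (k : ℝ) ^ 2 := by
        have : ((m : ℕ) : ℝ) ≤ ((k * k : ℕ) : ℝ) := by exact_mod_cast hcase
        push_cast at this
        nlinarith
      nlinarith
    · intro S hS hSk z hz
      refine ⟨{z}, Finset.mem_image.2 ⟨z, hS hz, rfl⟩, Finset.singleton_inter_of_mem hz⟩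
  · -- main case: counting construction
    push_neg at hcase
    have hcard : Fintype.card ↥(Finset.Icc 1 m) = m := by
      rw [Fintype.card_coe, Nat.card_Icc]; omega
    obtain ⟨N, hN, g, hg⟩ := core_selective ↥(Finset.Icc 1 m) k hk (by rw [hcard]; omega)
    rw [hcard] at hN
    set F0 : Finset (Finset ℕ) := (Finset.univ : Finset (Fin N × Fin (2 * k))).image
      (fun p => ((Finset.Icc 1 m).attach.filter
        (fun x => g p.1 x = p.2)).image Subtype.val) with hF0
    refine ⟨F0, ?_, ?_, ?_⟩
    · intro T hT
      obtain ⟨p, _, rfl⟩ := Finset.mem_image.1 hT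
      intro y hy
      obtain ⟨a, _, rfl⟩ := Finset.mem_image.1 hy
      exact a.2
    · -- cardinality bound
      have hc1 : F0.card ≤ N * (2 * k) := by
        rw [hF0]
        calc _ ≤ (Finset.univ : Finset (Fin N × Fin (2 * k))).card := Finset.card_image_le
          _ = N * (2 * k) := by
            rw [Finset.card_univ, Fintype.card_prod, Fintype.card_fin, Fintype.card_fin]
      have hc1' : (F0.card : ℝ) ≤ (N : ℝ) * (2 * (k : ℝ)) := by
        have := (Nat.cast_le (α := ℝ)).2 hc1
        push_cast at this
        linarith
      have hc2 : (N : ℝ) * (2 * (k : ℝ)) ≤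
          (((k : ℝ) + 1) * (((Nat.log 2 m : ℕ) : ℝ) + 2)) * (2 * (k : ℝ)) := by
        have h := (Nat.cast_le (α := ℝ)).2 hN
        push_cast at h
        nlinarith [h, (by positivity : (0:ℝ) ≤ 2 * (k : ℝ))]
      -- real log estimates
      have hm1 : (1 : ℝ) ≤ m := by exact_mod_cast le_trans hk hkm
      have hlogm : 0 ≤ Real.log m := Real.log_nonneg hm1
      have hL : (Nat.log 2 m : ℝ) ≤ 2 * Real.log m := by
        have h1 : (Nat.log 2 m : ℝ) ≤ Real.logb 2 m := Real.natLog_le_logb m 2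
        have h2 : Real.logb 2 m = Real.log m / Real.log 2 := rfl
        have h3 : (0.6931471803 : ℝ) < Real.log 2 := Real.log_two_gt_d9
        rw [h2] at h1
        have h4 : Real.log m / Real.log 2 ≤ 2 * Real.log m := by
          rw [div_le_iff₀ (by linarith)]
          nlinarith
        linarith
      have hlogk : Real.log k ≤ (1 / 2) * Real.log m := by
        have h1 : ((k : ℝ)) ^ 2 ≤ m := by
          have : ((k * k : ℕ) : ℝ) ≤ ((m : ℕ) : ℝ) := by
            exact_mod_cast le_of_lt hcase
          push_cast at this
          nlinarith
        have h2 : Real.log ((k : ℝ) ^ 2) ≤ Real.log m :=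
          Real.log_le_log (by positivity) h1
        rw [Real.log_pow] at h2
        push_cast at h2
        linarith
      have hdiv : Real.log ((m : ℝ) / k) = Real.log m - Real.log k :=
        Real.log_div (by positivity) (by positivity)
      calc (F0.card : ℝ)
          ≤ (N : ℝ) * (2 * (k : ℝ)) := hc1'
        _ ≤ (((k : ℝ) + 1) * (((Nat.log 2 m : ℕ) : ℝ) + 2)) * (2 * (k : ℝ)) := hc2
        _ ≤ 16 * (k : ℝ) ^ 2 * (1 + Real.log ((m : ℝ) / k)) := by
          rw [hdiv]
          have hk1 : (1 : ℝ) ≤ k := by exact_mod_cast hk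
          set L' := ((Nat.log 2 m : ℕ) : ℝ) with hL'
          have hL'0 : (0 : ℝ) ≤ L' := Nat.cast_nonneg _
          have hA : ((k : ℝ) + 1) * (L' + 2) * (2 * k) ≤ 4 * (k : ℝ) ^ 2 * (L' + 2) := by
            nlinarith [mul_nonneg (mul_nonneg (by linarith : (0:ℝ) ≤ (k:ℝ) - 1)
              (by linarith : (0:ℝ) ≤ L' + 2)) (by linarith : (0:ℝ) ≤ 2 * (k:ℝ))]
          have hB : 4 * (k : ℝ) ^ 2 * (L' + 2) ≤ 8 * (k : ℝ) ^ 2 * (Real.log m + 1) := by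
            nlinarith [mul_le_mul_of_nonneg_left hL (by positivity : (0:ℝ) ≤ 4 * (k:ℝ) ^ 2)]
          have hC : 8 * (k : ℝ) ^ 2 * (Real.log m + 1)
              ≤ 16 * (k : ℝ) ^ 2 * (1 + (Real.log m - Real.log k)) := by
            nlinarith [mul_le_mul_of_nonneg_left hlogk (by positivity : (0:ℝ) ≤ 16 * (k:ℝ) ^ 2),
              mul_nonneg (by positivity : (0:ℝ) ≤ (k:ℝ) ^ 2) hlogm]
          linarith
    · -- selection property
      intro S hS hSk z hz
      set S' : Finset ↥(Finset.Icc 1 m) :=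
        (Finset.Icc 1 m).attach.filter (fun x => ↑x ∈ S) with hS'
      have himg : S'.image Subtype.val = S := by
        ext x
        simp only [hS', Finset.mem_image, Finset.mem_filter, Finset.mem_attach, true_and]
        constructor
        · rintro ⟨a, ha, rfl⟩; exact ha
        · intro hx; exact ⟨⟨x, hS hx⟩, hx, rfl⟩
      have hcardS' : S'.card ≤ k := by
        rw [← himg] at hSk
        rwa [Finset.card_image_of_injective _ Subtype.val_injective] at hSk
      have hz' : (⟨z, hS hz⟩ : ↥(Finset.Icc 1 m)) ∈ S' := by
        simp [hS', hz]
      obtain ⟨i, hi⟩ := hg S' hcardS' ⟨z, hS hz⟩ hz'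
      refine ⟨_, Finset.mem_image.2 ⟨(i, g i ⟨z, hS hz⟩), Finset.mem_univ _, rfl⟩, ?_⟩
      ext x
      simp only [Finset.mem_inter, Finset.mem_singleton, Finset.mem_image,
        Finset.mem_filter, Finset.mem_attach, true_and]
      constructor
      · rintro ⟨⟨a, ha, rfl⟩, hxS⟩
        by_contra hne
        have haS' : a ∈ S' := by
          simp only [hS', Finset.mem_filter, Finset.mem_attach, true_and]
          exact hxS
        have hne' : a ≠ ⟨z, hS hz⟩ := by
          intro h; apply hne; rw [h]
        exact (hi a haS' hne') ha
      · rintro rfl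
        exact ⟨⟨⟨x, hS hz⟩, rfl, rfl⟩, hz⟩
end

section
/- Existence of Selecting-Colliding families: fix an integer c ≥ 2. There exists a constant D > 0 (depending only on c) such that for every integer l > 3 there exists a family F of subsets of {1,…,l^c} with |F| ≤ D · l² · Real.log l having the following property: for all disjoint subsets N_k, N_uk of {1,…,l^c} with |N_k| < l, N_uk nonempty, and such that N_k is nonempty whenever |N_uk| ≥ l, there exists S ∈ F satisfying at least one of (Condition A) |S ∩ N_uk| = 1 and S ∩ N_k = ∅, or (Condition B) |S ∩ N_k| = 1 and |S ∩ N_uk| ≥ 1. -/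
open Finset

lemma scf_card_pif {α : Type*} [Fintype α] [DecidableEq α] (m : ℕ) [NeZero m] (b : α)
    (W : Finset α) (hb : b ∉ W) :
    (Fintype.piFinset (fun a => if a = b then ({0} : Finset (Fin m)) else
        if a ∈ W then ({0}ᶜ : Finset (Fin m)) else Finset.univ)).card
      = (m - 1) ^ W.card * m ^ (Fintype.card α - 1 - W.card) := by
  rw [Fintype.card_piFinset]
  have hcc : ∀ a : α, (if a = b then ({0} : Finset (Fin m)) else
      if a ∈ W then ({0}ᶜ : Finset (Fin m)) else Finset.univ).card
      = if a = b then 1 else if a ∈ W then m - 1 else m := by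
    intro a
    by_cases h1 : a = b
    · simp [h1]
    · by_cases h2 : a ∈ W
      · simp [h1, h2, Finset.card_compl]
      · simp [h1, h2]
  rw [Finset.prod_congr rfl (fun a _ => hcc a)]
  rw [← Finset.mul_prod_erase Finset.univ _ (Finset.mem_univ b)]
  rw [if_pos rfl, one_mul]
  have hrw : ∀ a ∈ Finset.univ.erase b,
      (if a = b then 1 else if a ∈ W then m - 1 else m) = if a ∈ W then m - 1 else m := by
    intro a ha
    rw [if_neg (Finset.mem_erase.mp ha).1]
  rw [Finset.prod_congr rfl hrw]
  rw [← Finset.prod_filter_mul_prod_filter_not (Finset.univ.erase b) (· ∈ W)]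
  have h1 : (Finset.univ.erase b).filter (· ∈ W) = W := by
    ext a
    simp only [Finset.mem_filter, Finset.mem_erase, Finset.mem_univ, true_and, and_true]
    constructor
    · exact fun h => h.2
    · intro h; exact ⟨fun he => hb (he ▸ h), h⟩
  have h2 : ((Finset.univ.erase b).filter (fun a => ¬ a ∈ W)).card
      = Fintype.card α - 1 - W.card := by
    have := Finset.card_filter_add_card_filter_not (s := Finset.univ.erase b)
      (p := (· ∈ W))
    rw [h1] at this
    have hce : (Finset.univ.erase b).card = Fintype.card α - 1 := by
      rw [Finset.card_erase_of_mem (Finset.mem_univ b), Finset.card_univ]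
    omega
  rw [h1]
  rw [Finset.prod_congr rfl (fun x hx => if_pos hx),
    Finset.prod_congr rfl (fun x hx => if_neg (Finset.mem_filter.mp hx).2),
    Finset.prod_const, Finset.prod_const, h2]

lemma scf_union_bound {τ ι : Type*} [Fintype τ] [DecidableEq τ] [DecidableEq ι]
    (P : Finset ι) (Bad : ι → Finset τ) (t : ℕ)
    (h : ∑ p ∈ P, (Bad p).card ^ t < (Fintype.card τ) ^ t) :
    ∃ F : Fin t → τ, ∀ p ∈ P, ∃ i, F i ∉ Bad p := by
  classical
  set bu : Finset (Fin t → τ) := P.biUnion (fun p => Fintype.piFinset (fun _ : Fin t => Bad p))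
    with hbu
  have hcard : bu.card < (Finset.univ : Finset (Fin t → τ)).card := by
    calc bu.card ≤ ∑ p ∈ P, (Fintype.piFinset (fun _ : Fin t => Bad p)).card :=
          Finset.card_biUnion_le
      _ = ∑ p ∈ P, (Bad p).card ^ t := by
          refine Finset.sum_congr rfl fun p _ => ?_
          rw [Fintype.card_piFinset, Finset.prod_const, Finset.card_univ, Fintype.card_fin]
      _ < (Fintype.card τ) ^ t := h
      _ = (Finset.univ : Finset (Fin t → τ)).card := by
          rw [Finset.card_univ, Fintype.card_fun, Fintype.card_fin]
  have hex : ∃ F : Fin t → τ, F ∉ bu := by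
    by_contra hcon
    push_neg at hcon
    exact absurd (Finset.card_le_card (fun x _ => hcon x)) (not_le.mpr hcard)
  obtain ⟨F, hFn⟩ := hex
  refine ⟨F, fun p hp => ?_⟩
  by_contra hcon
  push_neg at hcon
  exact hFn (Finset.mem_biUnion.mpr ⟨p, hp, Fintype.mem_piFinset.mpr hcon⟩)

lemma scf_pow_lb {m k : ℕ} (hm : 2 ≤ m) (hk : k ≤ m) :
    (1/8 : ℝ) ≤ (((m : ℝ) - 1)/m) ^ k := by
  have hm2 : (2:ℝ) ≤ (m:ℝ) := by exact_mod_cast hm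
  have hm1 : (1:ℝ) ≤ (m:ℝ) - 1 := by linarith
  have hmpos : (0:ℝ) < m := by linarith
  have hx0 : (0:ℝ) ≤ ((m:ℝ) - 1)/m := by positivity
  have hx1 : ((m:ℝ) - 1)/m ≤ 1 := by rw [div_le_one hmpos]; linarith
  have h1 : (((m:ℝ) - 1)/m) ^ m ≤ (((m:ℝ) - 1)/m) ^ k := pow_le_pow_of_le_one hx0 hx1 hk
  refine le_trans ?_ h1
  have key : ((m:ℝ)/((m:ℝ) - 1)) ^ m ≤ 8 := by
    have h2 : (m:ℝ)/((m:ℝ) - 1) = 1 + 1/((m:ℝ) - 1) := by field_simp; ring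
    have h3 : (1:ℝ) + 1/((m:ℝ) - 1) ≤ Real.exp (1/((m:ℝ) - 1)) := by
      have := Real.add_one_le_exp (1/((m:ℝ) - 1)); linarith
    calc ((m:ℝ)/((m:ℝ) - 1)) ^ m ≤ (Real.exp (1/((m:ℝ) - 1))) ^ m := by
          rw [h2]; exact pow_le_pow_left₀ (by positivity) h3 m
      _ = Real.exp ((m:ℕ) * (1/((m:ℝ) - 1))) := by rw [← Real.exp_nat_mul]
      _ ≤ Real.exp 2 := by
          apply Real.exp_le_exp.mpr
          rw [mul_one_div, div_le_iff₀ (by linarith)]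
          linarith
      _ ≤ 8 := by
          have h := Real.exp_one_lt_d9
          have h2 : Real.exp 2 = Real.exp 1 * Real.exp 1 := by
            rw [← Real.exp_add]; norm_num
          nlinarith [Real.exp_pos 1]
  have hpos : (0:ℝ) < ((m:ℝ)/((m:ℝ) - 1)) ^ m := by positivity
  have heq : (((m:ℝ) - 1)/m) ^ m = (((m:ℝ)/((m:ℝ) - 1)) ^ m)⁻¹ := by
    rw [← inv_pow, inv_div]
  rw [heq, one_div]
  exact inv_anti₀ hpos key

lemma scf_pow_ub {l : ℕ} (hl : 1 ≤ l) :
    (((2*l : ℕ) : ℝ) - 1) ^ l / (((2*l : ℕ) : ℝ)) ^ l ≤ 3/4 := by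
  have hl1 : (1:ℝ) ≤ (l:ℝ) := by exact_mod_cast hl
  have hm : ((2*l : ℕ) : ℝ) = 2*(l:ℝ) := by push_cast; ring
  rw [← div_pow, hm]
  have hb0 : (0:ℝ) ≤ (2*(l:ℝ) - 1)/(2*(l:ℝ)) := by
    apply div_nonneg <;> linarith
  have hb : (2*(l:ℝ) - 1)/(2*(l:ℝ)) ≤ Real.exp (-(1/(2*(l:ℝ)))) := by
    have := Real.add_one_le_exp (-(1/(2*(l:ℝ))))
    have heq : (2*(l:ℝ) - 1)/(2*(l:ℝ)) = -(1/(2*(l:ℝ))) + 1 := by field_simp; ring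
    rw [heq]; linarith
  calc ((2*(l:ℝ) - 1)/(2*(l:ℝ))) ^ l ≤ (Real.exp (-(1/(2*(l:ℝ))))) ^ l :=
        pow_le_pow_left₀ hb0 hb l
    _ = Real.exp ((l:ℕ) * (-(1/(2*(l:ℝ))))) := by rw [← Real.exp_nat_mul]
    _ = Real.exp (-(1/2)) := by
        congr 1
        field_simp
    _ ≤ 3/4 := by
        rw [Real.exp_neg]
        have h1 : (3/2 : ℝ) ≤ Real.exp (1/2) := by
          have := Real.add_one_le_exp (1/2 : ℝ); linarith
        have h2 : (0:ℝ) < Real.exp (1/2) := Real.exp_pos _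
        rw [inv_le_iff_one_le_mul₀ h2]
        nlinarith

lemma scf_filter_card {α : Type*} [DecidableEq α] {U T : Finset α} (hT : T ⊆ U) :
    (Finset.univ.filter (fun a : {x // x ∈ U} => (a : α) ∈ T)).card = T.card := by
  classical
  refine Finset.card_bij (fun a _ => (a : α)) ?_ ?_ ?_
  · intro a ha; exact (Finset.mem_filter.mp ha).2
  · intro a _ b _ h; exact Subtype.ext h
  · intro y hy
    exact ⟨⟨y, hT hy⟩, Finset.mem_filter.mpr ⟨Finset.mem_univ _, hy⟩, rfl⟩

lemma scf_pow_lb' {m k : ℕ} (hm : 2 ≤ m) (hk : k ≤ m) :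
    (1/8 : ℝ) * (m:ℝ)^k ≤ ((m - 1 : ℕ) : ℝ)^k := by
  have hm2 : (2:ℝ) ≤ (m:ℝ) := by exact_mod_cast hm
  have hcast : ((m - 1 : ℕ) : ℝ) = (m:ℝ) - 1 := by
    have h1 : 1 ≤ m := by omega
    push_cast [h1]; ring
  have hlb : (1/8 : ℝ) ≤ (((m : ℝ) - 1)/m) ^ k := scf_pow_lb hm hk
  have hmpos : (0:ℝ) < (m:ℝ)^k := by positivity
  rw [hcast]
  calc (1/8 : ℝ) * (m:ℝ)^k ≤ (((m : ℝ) - 1)/m) ^ k * (m:ℝ)^k :=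
        mul_le_mul_of_nonneg_right hlb (le_of_lt hmpos)
    _ = ((m:ℝ) - 1)^k := by
        rw [div_pow, div_mul_cancel₀]
        positivity

lemma scf_pow_ub' {l : ℕ} (hl : 1 ≤ l) :
    ((2*l - 1 : ℕ) : ℝ)^l ≤ (3/4 : ℝ) * ((2*l : ℕ):ℝ)^l := by
  have hcast : ((2*l - 1 : ℕ) : ℝ) = ((2*l : ℕ):ℝ) - 1 := by
    have h1 : 1 ≤ 2*l := by omega
    push_cast [h1]; ring
  have h := scf_pow_ub hl
  have hpos : (0:ℝ) < (((2*l : ℕ)):ℝ)^l := by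
    have : (1:ℝ) ≤ ((2*l:ℕ):ℝ) := by exact_mod_cast (by omega : 1 ≤ 2*l)
    positivity
  rw [div_le_iff₀ hpos] at h
  rw [hcast]
  linarith

lemma scf_bound_small (l N w : ℕ) (hl : 4 ≤ l) (hw : w ≤ 2*l) (hwN : w + 1 ≤ N) :
    (((2*l : ℕ)):ℝ)^N ≤ 64 * l * (((2*l - 1)^w * (2*l)^(N - 1 - w) : ℕ) : ℝ) := by
  obtain ⟨e, he⟩ : ∃ e, N = e + w + 1 := ⟨N - 1 - w, by omega⟩
  have he2 : N - 1 - w = e := by omega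
  subst he
  rw [he2]
  have hlR : (4:ℝ) ≤ (l:ℝ) := by exact_mod_cast hl
  have h8 : (1/8 : ℝ) * ((2*l : ℕ):ℝ)^w ≤ ((2*l - 1 : ℕ) : ℝ)^w :=
    scf_pow_lb' (by omega) (by omega)
  have hA : ((2*l : ℕ) : ℝ) = 2*(l:ℝ) := by push_cast; ring
  rw [hA] at h8 ⊢
  rw [Nat.cast_mul, Nat.cast_pow, Nat.cast_pow, hA]
  have hprod : (0:ℝ) ≤ (2*(l:ℝ))^w * (2*(l:ℝ))^e := by positivity
  have hlX : (0:ℝ) ≤ (l:ℝ) * ((2*(l:ℝ))^w * (2*(l:ℝ))^e) := by positivity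
  have step : 64*(l:ℝ)*((1/8*(2*(l:ℝ))^w) * (2*(l:ℝ))^e)
      ≤ 64*(l:ℝ)*(((2*l - 1 : ℕ):ℝ)^w * (2*(l:ℝ))^e) := by
    apply mul_le_mul_of_nonneg_left _ (by positivity)
    exact mul_le_mul_of_nonneg_right h8 (by positivity)
  calc (2*(l:ℝ))^(e+w+1) = 2*(l:ℝ) * ((2*(l:ℝ))^w * (2*(l:ℝ))^e) := by ring
    _ ≤ 64*(l:ℝ)*((1/8*(2*(l:ℝ))^w) * (2*(l:ℝ))^e) := by nlinarith [hlX]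
    _ ≤ 64*(l:ℝ)*(((2*l - 1 : ℕ):ℝ)^w * (2*(l:ℝ))^e) := step

lemma scf_bound_big (l N w : ℕ) (hl : 4 ≤ l) (hw : w + 1 ≤ l) (hN : 4*l ≤ N) :
    (((2*l : ℕ)):ℝ) ^ N ≤ 64 * l *
      ((((2*l - 1)^w * (2*l)^(N - 1 - w) - (2*l - 1)^(w + l) * (2*l)^(N - 1 - (w + l))) : ℕ) : ℝ) := by
  obtain ⟨e, he⟩ : ∃ e, N = e + l + w + 1 := ⟨N - 1 - (w + l), by omega⟩
  have he2 : N - 1 - (w + l) = e := by omega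
  have he3 : N - 1 - w = e + l := by omega
  subst he
  rw [he2, he3]
  have hsub : (2*l - 1)^(w + l) * (2*l)^e ≤ (2*l - 1)^w * (2*l)^(e + l) := by
    rw [pow_add, pow_add]
    calc (2*l - 1)^w * (2*l - 1)^l * (2*l)^e ≤ (2*l - 1)^w * (2*l)^l * (2*l)^e := by
          apply Nat.mul_le_mul_right
          exact Nat.mul_le_mul_left _ (Nat.pow_le_pow_left (by omega) l)
      _ = (2*l - 1)^w * ((2*l)^e * (2*l)^l) := by ring
  rw [Nat.cast_sub hsub]
  have hlR : (4:ℝ) ≤ (l:ℝ) := by exact_mod_cast hl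
  have h8 : (1/8 : ℝ) * ((2*l : ℕ):ℝ)^w ≤ ((2*l - 1 : ℕ) : ℝ)^w :=
    scf_pow_lb' (by omega) (by omega)
  have h34 := scf_pow_ub' (show 1 ≤ l by omega)
  have hA : ((2*l : ℕ) : ℝ) = 2*(l:ℝ) := by push_cast; ring
  rw [hA] at h8 h34 ⊢
  rw [Nat.cast_mul, Nat.cast_mul, Nat.cast_pow, Nat.cast_pow, Nat.cast_pow, Nat.cast_pow, hA]
  set B : ℝ := ((2*l - 1 : ℕ) : ℝ) with hB
  have hB0 : (0:ℝ) ≤ B := Nat.cast_nonneg _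
  have key : (1/8*(2*(l:ℝ))^w) * (1/4*(2*(l:ℝ))^l) ≤ B^w * ((2*(l:ℝ))^l - B^l) := by
    apply mul_le_mul h8 (by linarith) (by positivity) (by positivity)
  have hfin : 64*(l:ℝ)*((2*(l:ℝ))^e * ((1/8*(2*(l:ℝ))^w) * (1/4*(2*(l:ℝ))^l)))
      ≤ 64*(l:ℝ)*((2*(l:ℝ))^e * (B^w * ((2*(l:ℝ))^l - B^l))) := by
    apply mul_le_mul_of_nonneg_left _ (by positivity)
    exact mul_le_mul_of_nonneg_left key (by positivity)
  calc (2*(l:ℝ))^(e+l+w+1)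
      = 64*(l:ℝ)*((2*(l:ℝ))^e * ((1/8*(2*(l:ℝ))^w) * (1/4*(2*(l:ℝ))^l))) := by ring
    _ ≤ 64*(l:ℝ)*((2*(l:ℝ))^e * (B^w * ((2*(l:ℝ))^l - B^l))) := hfin
    _ = 64*(l:ℝ)*(B^w * (2*(l:ℝ))^(e+l) - B^(w+l) * (2*(l:ℝ))^e) := by ring

lemma scf_t_bound (c l K : ℕ) (hc : 2 ≤ c) (hl : 4 ≤ l) (hK : (2:ℕ)^K ≤ l) :
    ((64 * l * (4 * c * l * (K+1) + 1) : ℕ) : ℝ) ≤ 1000*(c:ℝ)*(l:ℝ)^2*Real.log l := by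
  have hcR : (2:ℝ) ≤ (c:ℝ) := by exact_mod_cast hc
  have hlR : (4:ℝ) ≤ (l:ℝ) := by exact_mod_cast hl
  have hlog2 := Real.log_two_gt_d9
  have hK2 : (K:ℝ) * Real.log 2 ≤ Real.log l := by
    have h2 : ((2:ℝ))^K ≤ (l:ℝ) := by exact_mod_cast hK
    calc (K:ℝ) * Real.log 2 = Real.log ((2:ℝ)^K) := by rw [Real.log_pow]
      _ ≤ Real.log l := Real.log_le_log (by positivity) h2
  have hlogl : (1.386:ℝ) ≤ Real.log l := by
    have h4 : Real.log 4 ≤ Real.log l := Real.log_le_log (by norm_num) hlR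
    have h5 : Real.log 4 = 2 * Real.log 2 := by
      rw [show (4:ℝ) = 2^2 by norm_num, Real.log_pow]
      push_cast; ring
    linarith
  have hK0 : (0:ℝ) ≤ (K:ℝ) := Nat.cast_nonneg K
  have hKle : (K:ℝ) + 1 ≤ 2.2 * Real.log l := by nlinarith
  have htR : ((64 * l * (4 * c * l * (K+1) + 1) : ℕ) : ℝ)
      = 256*(c:ℝ)*(l:ℝ)^2*((K:ℝ)+1) + 64*(l:ℝ) := by push_cast; ring
  rw [htR]
  have h1 : 256*(c:ℝ)*(l:ℝ)^2*((K:ℝ)+1) ≤ 256*(c:ℝ)*(l:ℝ)^2*(2.2*Real.log l) :=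
    mul_le_mul_of_nonneg_left hKle (by positivity)
  have h3 : (0:ℝ) ≤ (c:ℝ)*(l:ℝ)^2*Real.log l :=
    mul_nonneg (by positivity) (by linarith)
  have hcl : (2.772:ℝ) ≤ (c:ℝ)*Real.log l := by nlinarith
  have hclL : (2.772:ℝ)*(l:ℝ)^2 ≤ (c:ℝ)*Real.log l*(l:ℝ)^2 :=
    mul_le_mul_of_nonneg_right hcl (by positivity)
  have hll : (l:ℝ) ≤ (l:ℝ)^2 := by nlinarith
  nlinarith [h1, h3, hclL, hll]

/-- Existence of Selecting-Colliding families: for a fixed integer `c ≥ 2` there is a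
constant `D > 0` such that for every integer `l > 3` there is a family `F` of subsets of
`{1,…,l^c}` with `|F| ≤ D·l²·log l` such that for all disjoint `N_k, N_uk ⊆ {1,…,l^c}`
with `|N_k| < l`, `N_uk` nonempty, and `N_k` nonempty whenever `|N_uk| ≥ l`, some
`S ∈ F` satisfies Condition A (`|S ∩ N_uk| = 1` and `S ∩ N_k = ∅`) or Condition B
(`|S ∩ N_k| = 1` and `|S ∩ N_uk| ≥ 1`). -/
theorem selecting_colliding_family_exists (c : ℕ) (hc : 2 ≤ c) :
    ∃ D : ℝ, 0 < D ∧
      ∀ l : ℕ, 3 < l →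
        ∃ F : Finset (Finset ℕ),
          (∀ S ∈ F, S ⊆ Finset.Icc 1 (l ^ c)) ∧
          (F.card : ℝ) ≤ D * (l : ℝ) ^ 2 * Real.log (l : ℝ) ∧
          (∀ Nk Nuk : Finset ℕ,
            Nk ⊆ Finset.Icc 1 (l ^ c) → Nuk ⊆ Finset.Icc 1 (l ^ c) →
            Disjoint Nk Nuk → Nk.card < l → Nuk.Nonempty →
            (l ≤ Nuk.card → Nk.Nonempty) →
            ∃ S ∈ F,
              ((S ∩ Nuk).card = 1 ∧ S ∩ Nk = ∅) ∨
              ((S ∩ Nk).card = 1 ∧ 1 ≤ (S ∩ Nuk).card)) := by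
  classical
  have hcR : (2:ℝ) ≤ (c:ℝ) := by exact_mod_cast hc
  refine ⟨1000 * (c:ℝ), by linarith, ?_⟩
  intro l hl
  have hl4 : 4 ≤ l := hl
  have hlR : (4:ℝ) ≤ (l:ℝ) := by exact_mod_cast hl4
  set n := l ^ c with hn
  set U : Finset ℕ := Finset.Icc 1 n with hUdef
  set m := 2 * l with hmdef
  haveI : NeZero m := ⟨by omega⟩
  set N := U.card with hNdef
  have hNn : N = n := by rw [hNdef, hUdef, Nat.card_Icc]; omega
  have hcardU : Fintype.card {x // x ∈ U} = N := Fintype.card_coe U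
  have hln : l ^ 2 ≤ n := by rw [hn]; exact Nat.pow_le_pow_right (by omega) hc
  have hNbig : 4 * l ≤ N := by rw [hNn]; nlinarith
  set Sof : ({x // x ∈ U} → Fin m) → Finset ℕ :=
    fun f => U.filter (fun y => ∃ hy : y ∈ U, f ⟨y, hy⟩ = 0)
    with hSofdef
  have hmemSof : ∀ f y, y ∈ Sof f ↔ ∃ hy : y ∈ U, f ⟨y, hy⟩ = 0 := by
    intro f y
    constructor
    · intro h
      exact (Finset.mem_filter.mp h).2
    · rintro ⟨hy, hf⟩
      exact Finset.mem_filter.mpr ⟨hy, hy, hf⟩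
  have hSofU : ∀ f, Sof f ⊆ U := by
    intro f y hy
    obtain ⟨hyU, -⟩ := (hmemSof f y).mp hy
    exact hyU
  set good : Finset ℕ × Finset ℕ → ({x // x ∈ U} → Fin m) → Prop :=
    fun p f => (p.2.card = l → ((Sof f ∩ p.1).card = 1 ∧ (Sof f ∩ p.2).Nonempty)) ∧
      (p.2.card ≠ l → ((Sof f ∩ p.2).card = 1 ∧ Sof f ∩ p.1 = ∅)) with hgooddef
  set P : Finset (Finset ℕ × Finset ℕ) :=
    (U.powerset ×ˢ U.powerset).filter
      (fun p => Disjoint p.1 p.2 ∧ p.1.card < l ∧ p.2.Nonempty ∧ p.2.card ≤ l ∧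
        (p.2.card = l → p.1.Nonempty)) with hPdef
  set Bad : Finset ℕ × Finset ℕ → Finset ({x // x ∈ U} → Fin m) :=
    fun p => Finset.univ.filter (fun f => ¬ good p f) with hBaddef
  have hGood : ∀ p ∈ P, ((m:ℝ))^N ≤ 64 * l * ((Finset.univ.filter (good p)).card) := by
    intro p hp
    rw [hPdef] at hp
    simp only [Finset.mem_filter, Finset.mem_product, Finset.mem_powerset] at hp
    obtain ⟨⟨hp1U, hp2U⟩, hdisj, h1card, h2ne, h2le, h2imp⟩ := hp
    by_cases hc2l : p.2.card = l
    · -- big case: isolate an element of p.1 and hit p.2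
      obtain ⟨x0, hx0⟩ := h2imp hc2l
      have hx0U : x0 ∈ U := hp1U hx0
      have hx0p2 : x0 ∉ p.2 := Finset.disjoint_left.mp hdisj hx0
      have hx0card : 0 < p.1.card := Finset.card_pos.mpr ⟨x0, hx0⟩
      set T1 : Finset ℕ := p.1.erase x0 with hT1
      set T2 : Finset ℕ := p.1.erase x0 ∪ p.2 with hT2
      have hT1U : T1 ⊆ U := (Finset.erase_subset _ _).trans hp1U
      have hT2U : T2 ⊆ U := Finset.union_subset ((Finset.erase_subset _ _).trans hp1U) hp2U
      set b : {x // x ∈ U} := ⟨x0, hx0U⟩ with hb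
      set W1 := Finset.univ.filter (fun a : {x // x ∈ U} => (a:ℕ) ∈ T1) with hW1
      set W2 := Finset.univ.filter (fun a : {x // x ∈ U} => (a:ℕ) ∈ T2) with hW2
      have hbW1 : b ∉ W1 := by
        rw [hW1, Finset.mem_filter]
        rintro ⟨-, hmem⟩
        exact (Finset.notMem_erase x0 p.1) hmem
      have hbW2 : b ∉ W2 := by
        rw [hW2, Finset.mem_filter]
        rintro ⟨-, hmem⟩
        rcases Finset.mem_union.mp hmem with h | h
        · exact (Finset.notMem_erase x0 p.1) h
        · exact hx0p2 h
      have hW1card : W1.card = p.1.card - 1 := by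
        rw [hW1, scf_filter_card hT1U, hT1, Finset.card_erase_of_mem hx0]
      have hW2card : W2.card = W1.card + l := by
        rw [hW1, hW2, scf_filter_card hT1U, scf_filter_card hT2U, hT2,
          Finset.card_union_of_disjoint (hdisj.mono_left (Finset.erase_subset _ _)), hc2l]
      set g1 := fun a : {x // x ∈ U} => if a = b then ({0} : Finset (Fin m)) else
        if a ∈ W1 then ({0}ᶜ : Finset (Fin m)) else Finset.univ with hg1
      set g2 := fun a : {x // x ∈ U} => if a = b then ({0} : Finset (Fin m)) else
        if a ∈ W2 then ({0}ᶜ : Finset (Fin m)) else Finset.univ with hg2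
      have hW12 : W1 ⊆ W2 := by
        rw [hW1, hW2]
        intro a ha
        rw [Finset.mem_filter] at ha ⊢
        refine ⟨ha.1, ?_⟩
        rw [hT2]
        exact Finset.mem_union_left _ (by rw [← hT1]; exact ha.2)
      have hsub : Fintype.piFinset g2 ⊆ Fintype.piFinset g1 := by
        apply Fintype.piFinset_subset
        intro a
        rw [hg1, hg2]
        by_cases h1 : a = b
        · simp [h1]
        · by_cases h2 : a ∈ W1
          · simp [h1, h2, hW12 h2]
          · simp only [if_neg h1, if_neg h2]
            exact Finset.subset_univ _
      have hEcard : (Fintype.piFinset g1 \ Fintype.piFinset g2).card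
          = (m-1)^(W1.card) * m^(N - 1 - W1.card)
            - (m-1)^(W1.card + l) * m^(N - 1 - (W1.card + l)) := by
        rw [Finset.card_sdiff_of_subset hsub, hg1, hg2, scf_card_pif m b W1 hbW1,
          scf_card_pif m b W2 hbW2, hcardU, hW2card]
      have hEGood : (Fintype.piFinset g1 \ Fintype.piFinset g2) ⊆ Finset.univ.filter (good p) := by
        intro f hf
        obtain ⟨hf1, hf2⟩ := Finset.mem_sdiff.mp hf
        rw [Fintype.mem_piFinset] at hf1
        have hfb : f b = 0 := by
          have h := hf1 b
          simp only [hg1] at h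
          simpa using h
        have hfT1 : ∀ (y : ℕ) (hy : y ∈ U), y ∈ T1 → f ⟨y, hy⟩ ≠ 0 := by
          intro y hy hyT
          have hne : (⟨y, hy⟩ : {x // x ∈ U}) ≠ b := by
            intro h
            have hyx : y = x0 := congrArg Subtype.val h
            rw [hT1, hyx] at hyT
            exact (Finset.notMem_erase x0 p.1) hyT
          have hyW1 : (⟨y, hy⟩ : {x // x ∈ U}) ∈ W1 := by
            rw [hW1]; exact Finset.mem_filter.mpr ⟨Finset.mem_univ _, hyT⟩
          have h := hf1 ⟨y, hy⟩
          simp only [hg1] at h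
          simp only [if_neg hne, if_pos hyW1] at h
          simpa using h
        have hSA : Sof f ∩ p.1 = {x0} := by
          ext y
          simp only [Finset.mem_inter, Finset.mem_singleton]
          constructor
          · rintro ⟨hyS, hyA⟩
            by_contra hne
            obtain ⟨hyU, hf0⟩ := (hmemSof f y).mp hyS
            exact hfT1 y hyU (by rw [hT1]; exact Finset.mem_erase.mpr ⟨hne, hyA⟩) hf0
          · rintro rfl
            exact ⟨(hmemSof f y).mpr ⟨hx0U, hfb⟩, hx0⟩
        have hSB : (Sof f ∩ p.2).Nonempty := by
          rw [Fintype.mem_piFinset] at hf2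
          push_neg at hf2
          obtain ⟨a, ha⟩ := hf2
          simp only [hg2] at ha
          by_cases h1 : a = b
          · rw [h1] at ha
            simp only [if_pos rfl] at ha
            exact absurd (Finset.mem_singleton.mpr hfb) ha
          · rw [if_neg h1] at ha
            by_cases h2 : a ∈ W2
            · rw [if_pos h2] at ha
              have hfa0 : f a = 0 := by
                by_contra hcon
                exact ha (Finset.mem_compl.mpr (by simpa using hcon))
              have haT2 : (a:ℕ) ∈ T2 := by
                rw [hW2] at h2
                exact (Finset.mem_filter.mp h2).2
              rw [hT2] at haT2
              rcases Finset.mem_union.mp haT2 with h | h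
              · exfalso
                refine hfT1 (a:ℕ) a.2 (by rw [hT1]; exact h) ?_
                rw [Subtype.coe_eta]
                exact hfa0
              · refine ⟨(a:ℕ), Finset.mem_inter.mpr ⟨(hmemSof f (a:ℕ)).mpr ⟨a.2, ?_⟩, h⟩⟩
                rw [Subtype.coe_eta]
                exact hfa0
            · rw [if_neg h2] at ha
              exact absurd (Finset.mem_univ _) ha
        refine Finset.mem_filter.mpr ⟨Finset.mem_univ _, ?_⟩
        rw [hgooddef]
        exact ⟨fun _ => ⟨by rw [hSA]; exact Finset.card_singleton x0, hSB⟩,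
          fun hne => absurd hc2l hne⟩
      have hwl : W1.card + 1 ≤ l := by omega
      have hle : (m-1)^(W1.card) * m^(N - 1 - W1.card)
          - (m-1)^(W1.card + l) * m^(N - 1 - (W1.card + l))
          ≤ (Finset.univ.filter (good p)).card := by
        rw [← hEcard]
        exact Finset.card_le_card hEGood
      exact le_trans (scf_bound_big l N W1.card hl4 hwl hNbig)
        (mul_le_mul_of_nonneg_left (Nat.cast_le.mpr hle) (by positivity))
    · -- small case: isolate an element of p.2 avoiding all of p.1 ∪ p.2
      obtain ⟨x0, hx0⟩ := h2ne
      have hx0U : x0 ∈ U := hp2U hx0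
      have hx0p1 : x0 ∉ p.1 := Finset.disjoint_right.mp hdisj hx0
      set T : Finset ℕ := (p.1 ∪ p.2).erase x0 with hT
      have hTU : T ⊆ U := (Finset.erase_subset _ _).trans (Finset.union_subset hp1U hp2U)
      set b : {x // x ∈ U} := ⟨x0, hx0U⟩ with hb
      set W := Finset.univ.filter (fun a : {x // x ∈ U} => (a:ℕ) ∈ T) with hW
      have hbW : b ∉ W := by
        rw [hW, Finset.mem_filter]
        rintro ⟨-, hmem⟩
        exact (Finset.notMem_erase x0 _) hmem
      have hWcard : W.card = (p.1 ∪ p.2).card - 1 := by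
        rw [hW, scf_filter_card hTU, hT, Finset.card_erase_of_mem (Finset.mem_union_right _ hx0)]
      set g := fun a : {x // x ∈ U} => if a = b then ({0} : Finset (Fin m)) else
        if a ∈ W then ({0}ᶜ : Finset (Fin m)) else Finset.univ with hg
      have hEcard : (Fintype.piFinset g).card = (m-1)^(W.card) * m^(N - 1 - W.card) := by
        rw [hg, scf_card_pif m b W hbW, hcardU]
      have hEGood : Fintype.piFinset g ⊆ Finset.univ.filter (good p) := by
        intro f hf
        rw [Fintype.mem_piFinset] at hf
        have hfb : f b = 0 := by
          have h := hf b
          simp only [hg] at h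
          simpa using h
        have hfT : ∀ (y : ℕ) (hy : y ∈ U), y ∈ T → f ⟨y, hy⟩ ≠ 0 := by
          intro y hy hyT
          have hne : (⟨y, hy⟩ : {x // x ∈ U}) ≠ b := by
            intro h
            have hyx : y = x0 := congrArg Subtype.val h
            rw [hT, hyx] at hyT
            exact (Finset.notMem_erase x0 _) hyT
          have hyW : (⟨y, hy⟩ : {x // x ∈ U}) ∈ W := by
            rw [hW]; exact Finset.mem_filter.mpr ⟨Finset.mem_univ _, hyT⟩
          have h := hf ⟨y, hy⟩
          simp only [hg] at h
          simp only [if_neg hne, if_pos hyW] at h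
          simpa using h
        have hSB : Sof f ∩ p.2 = {x0} := by
          ext y
          simp only [Finset.mem_inter, Finset.mem_singleton]
          constructor
          · rintro ⟨hyS, hyB⟩
            by_contra hne
            obtain ⟨hyU, hf0⟩ := (hmemSof f y).mp hyS
            refine hfT y hyU ?_ hf0
            rw [hT]
            exact Finset.mem_erase.mpr ⟨hne, Finset.mem_union_right _ hyB⟩
          · rintro rfl
            exact ⟨(hmemSof f y).mpr ⟨hx0U, hfb⟩, hx0⟩
        have hSA : Sof f ∩ p.1 = ∅ := by
          rw [Finset.eq_empty_iff_forall_notMem]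
          intro y hy
          obtain ⟨hyS, hyA⟩ := Finset.mem_inter.mp hy
          have hne : y ≠ x0 := by
            intro h
            rw [h] at hyA
            exact hx0p1 hyA
          obtain ⟨hyU, hf0⟩ := (hmemSof f y).mp hyS
          refine hfT y hyU ?_ hf0
          rw [hT]
          exact Finset.mem_erase.mpr ⟨hne, Finset.mem_union_left _ hyA⟩
        refine Finset.mem_filter.mpr ⟨Finset.mem_univ _, ?_⟩
        rw [hgooddef]
        exact ⟨fun h => absurd h hc2l,
          fun _ => ⟨by rw [hSB]; exact Finset.card_singleton x0, hSA⟩⟩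
      have hunion : (p.1 ∪ p.2).card ≤ p.1.card + p.2.card := Finset.card_union_le _ _
      have hunion2 : 0 < (p.1 ∪ p.2).card :=
        Finset.card_pos.mpr ⟨x0, Finset.mem_union_right _ hx0⟩
      have hunionN : (p.1 ∪ p.2).card ≤ N :=
        Finset.card_le_card (Finset.union_subset hp1U hp2U)
      have hwle : W.card ≤ 2*l := by omega
      have hwN : W.card + 1 ≤ N := by omega
      have hle : (m-1)^(W.card) * m^(N - 1 - W.card)
          ≤ (Finset.univ.filter (good p)).card := by
        rw [← hEcard]
        exact Finset.card_le_card hEGood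
      exact le_trans (scf_bound_small l N W.card hl4 hwle hwN)
        (mul_le_mul_of_nonneg_left (Nat.cast_le.mpr hle) (by positivity))
  have hBadcard : ∀ p ∈ P, ((Bad p).card : ℝ) ≤ (1 - 1/(64*l)) * (m:ℝ)^N := by
    intro p hp
    have h1 := hGood p hp
    have h2 : (Finset.univ.filter (good p)).card + (Bad p).card
        = Fintype.card ({x // x ∈ U} → Fin m) := by
      rw [hBaddef]
      exact Finset.card_filter_add_card_filter_not _
    have h3 : Fintype.card ({x // x ∈ U} → Fin m) = m ^ N := by
      rw [Fintype.card_fun, Fintype.card_fin, hcardU]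
    have h4 : ((Finset.univ.filter (good p)).card : ℝ) + (Bad p).card = (m:ℝ)^N := by
      rw [h3] at h2
      exact_mod_cast h2
    have hl0 : (0:ℝ) < l := by linarith
    rw [sub_mul, one_mul]
    have : (m:ℝ)^N / (64 * l) ≤ ((Finset.univ.filter (good p)).card : ℝ) := by
      rw [div_le_iff₀ (by positivity)]
      linarith
    have he : 1/(64*(l:ℝ)) * (m:ℝ)^N = (m:ℝ)^N / (64*l) := by ring
    rw [he]
    linarith
  set K := Nat.log 2 l with hKdef
  set t := 64 * l * (4 * c * l * (K+1) + 1) with htdef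
  have hPcardNat : P.card ≤ n^(2*l+2) := by
    set Bset := (Finset.range (l+1)).biUnion (fun j => U.powersetCard j) with hBset
    have hPsub : P ⊆ Bset ×ˢ Bset := by
      intro p hp
      rw [hPdef] at hp
      simp only [Finset.mem_filter, Finset.mem_product, Finset.mem_powerset] at hp
      obtain ⟨⟨h1, h2⟩, -, h3, -, h4, -⟩ := hp
      rw [Finset.mem_product]
      constructor
      · rw [hBset]
        exact Finset.mem_biUnion.mpr ⟨p.1.card, Finset.mem_range.mpr (by omega),
          Finset.mem_powersetCard.mpr ⟨h1, rfl⟩⟩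
      · rw [hBset]
        exact Finset.mem_biUnion.mpr ⟨p.2.card, Finset.mem_range.mpr (by omega),
          Finset.mem_powersetCard.mpr ⟨h2, rfl⟩⟩
    have hn1 : 1 ≤ n := by
      have := hln; nlinarith
    have hBcard : Bset.card ≤ n^(l+1) := by
      calc Bset.card ≤ ∑ j ∈ Finset.range (l+1), (U.powersetCard j).card :=
            Finset.card_biUnion_le
        _ ≤ ∑ _j ∈ Finset.range (l+1), n^l := by
            apply Finset.sum_le_sum
            intro j hj
            rw [Finset.card_powersetCard, ← hNdef, hNn]
            calc n.choose j ≤ n^j := Nat.choose_le_pow n j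
              _ ≤ n^l := Nat.pow_le_pow_right hn1 (by
                  have := Finset.mem_range.mp hj; omega)
        _ = (l+1) * n^l := by rw [Finset.sum_const, Finset.card_range, smul_eq_mul]
        _ ≤ n * n^l := by
            apply Nat.mul_le_mul_right
            nlinarith
        _ = n^(l+1) := by rw [pow_succ, Nat.mul_comm]
    calc P.card ≤ (Bset ×ˢ Bset).card := Finset.card_le_card hPsub
      _ = Bset.card * Bset.card := Finset.card_product _ _
      _ ≤ n^(l+1) * n^(l+1) := Nat.mul_le_mul hBcard hBcard
      _ = n^(2*l+2) := by rw [← pow_add]; ring_nf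
  have hub : ∑ p ∈ P, (Bad p).card ^ t < (Fintype.card ({x // x ∈ U} → Fin m)) ^ t := by
    have hcardτ : Fintype.card ({x // x ∈ U} → Fin m) = m ^ N := by
      rw [Fintype.card_fun, Fintype.card_fin, hcardU]
    rw [hcardτ]
    have hlpos : (0:ℝ) < (l:ℝ) := by linarith
    have hq0 : (0:ℝ) ≤ 1 - 1/(64*(l:ℝ)) := by
      have h1 : 1/(64*(l:ℝ)) ≤ 1 := by
        rw [div_le_one (by positivity)]; linarith
      linarith
    have hm0 : (0:ℝ) < (m:ℝ) := by
      rw [hmdef]; push_cast; linarith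
    have hM0 : (0:ℝ) < (m:ℝ)^N := by positivity
    set R : ℕ := 4*c*l*(K+1) with hR
    have hP2 : (P.card : ℝ) ≤ ((2:ℝ))^R := by
      have hnat : P.card ≤ 2^R := by
        calc P.card ≤ n^(2*l+2) := hPcardNat
          _ = l^(c*(2*l+2)) := by rw [hn, ← pow_mul]
          _ ≤ l^(4*c*l) := Nat.pow_le_pow_right (by omega)
              (by
                have h1 : 2*l+2 ≤ 4*l := by omega
                calc c*(2*l+2) ≤ c*(4*l) := Nat.mul_le_mul_left c h1
                  _ = 4*c*l := by ring)
          _ ≤ (2^(K+1))^(4*c*l) := Nat.pow_le_pow_left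
              (le_of_lt (Nat.lt_pow_succ_log_self (by norm_num) l)) _
          _ = 2^R := by rw [← pow_mul, hR]; ring_nf
      exact_mod_cast hnat
    have h2e : (2:ℝ) ≤ Real.exp 1 := by
      have := Real.add_one_le_exp 1; linarith
    have h2exp : ((2:ℝ))^R < Real.exp ((R:ℝ) + 1) := by
      calc ((2:ℝ))^R ≤ (Real.exp 1)^R := pow_le_pow_left₀ (by norm_num) h2e R
        _ = Real.exp ((R:ℕ) * (1:ℝ)) := by rw [← Real.exp_nat_mul]
        _ < Real.exp ((R:ℝ) + 1) := by
            apply Real.exp_lt_exp.mpr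
            rw [mul_one]
            linarith
    have hqt : (1 - 1/(64*(l:ℝ)))^t ≤ Real.exp (-((R:ℝ) + 1)) := by
      have hstep : 1 - 1/(64*(l:ℝ)) ≤ Real.exp (-(1/(64*(l:ℝ)))) := by
        have := Real.add_one_le_exp (-(1/(64*(l:ℝ)))); linarith
      calc (1 - 1/(64*(l:ℝ)))^t ≤ (Real.exp (-(1/(64*(l:ℝ)))))^t :=
            pow_le_pow_left₀ hq0 hstep t
        _ = Real.exp ((t:ℕ) * (-(1/(64*(l:ℝ))))) := by rw [← Real.exp_nat_mul]
        _ = Real.exp (-((R:ℝ) + 1)) := by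
            congr 1
            rw [htdef, hR]
            push_cast
            field_simp
    have hkey : (P.card : ℝ) * (1 - 1/(64*(l:ℝ)))^t < 1 := by
      calc (P.card : ℝ) * (1 - 1/(64*(l:ℝ)))^t
          ≤ ((2:ℝ))^R * Real.exp (-((R:ℝ) + 1)) := by
            apply mul_le_mul hP2 hqt (pow_nonneg hq0 t) (by positivity)
        _ < Real.exp ((R:ℝ) + 1) * Real.exp (-((R:ℝ) + 1)) := by
            apply mul_lt_mul_of_pos_right h2exp (Real.exp_pos _)
        _ = 1 := by rw [← Real.exp_add, add_neg_cancel, Real.exp_zero]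
    have hRlt : ((∑ p ∈ P, (Bad p).card ^ t : ℕ) : ℝ) < (((m ^ N) ^ t : ℕ) : ℝ) := by
      push_cast
      calc ∑ p ∈ P, ((Bad p).card : ℝ)^t
          ≤ ∑ _p ∈ P, ((1 - 1/(64*(l:ℝ))) * (m:ℝ)^N)^t := by
            apply Finset.sum_le_sum
            intro p hp
            exact pow_le_pow_left₀ (Nat.cast_nonneg _) (hBadcard p hp) t
        _ = (P.card : ℝ) * ((1 - 1/(64*(l:ℝ))) * (m:ℝ)^N)^t := by
            rw [Finset.sum_const, nsmul_eq_mul]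
        _ = ((P.card : ℝ) * (1 - 1/(64*(l:ℝ)))^t) * ((m:ℝ)^N)^t := by
            rw [mul_pow]; ring
        _ < 1 * ((m:ℝ)^N)^t := by
            apply mul_lt_mul_of_pos_right hkey (by positivity)
        _ = ((m:ℝ)^N)^t := by rw [one_mul]
    exact_mod_cast hRlt
  obtain ⟨Fh, hFh⟩ := scf_union_bound P Bad t hub
  have hFhgood : ∀ p ∈ P, ∃ i, good p (Fh i) := by
    intro p hp
    obtain ⟨i, hi⟩ := hFh p hp
    refine ⟨i, ?_⟩
    by_contra hcon
    exact hi (Finset.mem_filter.mpr ⟨Finset.mem_univ _, hcon⟩)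
  refine ⟨Finset.image (fun i => Sof (Fh i)) Finset.univ, ?_, ?_, ?_⟩
  · intro S hS
    obtain ⟨i, -, rfl⟩ := Finset.mem_image.mp hS
    exact hSofU _
  · have hcard1 : (Finset.image (fun i => Sof (Fh i)) Finset.univ).card ≤ t := by
      calc (Finset.image (fun i => Sof (Fh i)) Finset.univ).card
          ≤ (Finset.univ : Finset (Fin t)).card := Finset.card_image_le
        _ = t := by rw [Finset.card_univ, Fintype.card_fin]
    have hKl : (2:ℕ)^K ≤ l := Nat.pow_log_le_self 2 (by omega)
    have hbound := scf_t_bound c l K hc hl4 hKl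
    rw [← htdef] at hbound
    exact le_trans (by exact_mod_cast hcard1) hbound
  · intro Nk Nuk hNkU hNukU hdisj hNkcard hNuk hNukbig
    by_cases hbig : l ≤ Nuk.card
    · obtain ⟨B', hB'sub, hB'card⟩ := Finset.exists_subset_card_eq hbig
      have hpair : (Nk, B') ∈ P := by
        rw [hPdef]
        simp only [Finset.mem_filter, Finset.mem_product, Finset.mem_powerset]
        refine ⟨⟨hNkU, hB'sub.trans hNukU⟩, hdisj.mono_right hB'sub, hNkcard, ?_, ?_, ?_⟩
        · rw [← Finset.card_pos, hB'card]; omega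
        · omega
        · intro _; exact hNukbig hbig
      obtain ⟨i, hgi⟩ := hFhgood _ hpair
      obtain ⟨h1, h2⟩ := hgi.1 hB'card
      refine ⟨Sof (Fh i), Finset.mem_image.mpr ⟨i, Finset.mem_univ _, rfl⟩, Or.inr ⟨h1, ?_⟩⟩
      rw [Nat.one_le_iff_ne_zero, ← Nat.pos_iff_ne_zero, Finset.card_pos]
      exact h2.mono (Finset.inter_subset_inter (Finset.Subset.refl _) hB'sub)
    · push_neg at hbig
      have hpair : (Nk, Nuk) ∈ P := by
        rw [hPdef]
        simp only [Finset.mem_filter, Finset.mem_product, Finset.mem_powerset]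
        exact ⟨⟨hNkU, hNukU⟩, hdisj, hNkcard, hNuk, le_of_lt hbig, fun h => absurd h (Nat.ne_of_lt hbig)⟩
      obtain ⟨i, hgi⟩ := hFhgood _ hpair
      obtain ⟨h1, h2⟩ := hgi.2 (Nat.ne_of_lt hbig)
      exact ⟨Sof (Fh i), Finset.mem_image.mpr ⟨i, Finset.mem_univ _, rfl⟩, Or.inl ⟨h1, h2⟩⟩
end

section
/- Core probabilistic-method step at a fixed dyadic scale: fix an integer c ≥ 2. There exists a constant d > 0 (depending only on c) such that for all integers l > 3 and m with 1 ≤ m ≤ l, there exists a family F of subsets of {1,…,l^c} with |F| ≤ d · l · m · Real.log l such that for all disjoint subsets N_k, N_uk of {1,…,l^c} with ⌈m/2⌉ ≤ |N_k| ≤ m and |N_uk| ≥ l, there exists S ∈ F with |S ∩ N_k| = 1 and |S ∩ N_uk| ≥ 1. -/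
open Finset

set_option maxHeartbeats 10000000


/-- The subset of `U` selected by a coloring `f` (elements colored `0`). -/
def selSet (U : Finset ℕ) (m : ℕ) [NeZero m] (f : {x // x ∈ U} → Fin m) : Finset ℕ :=
  (U.attach.filter (fun x => f x = 0)).image Subtype.val

lemma selSet_subset (U : Finset ℕ) (m : ℕ) [NeZero m] (f : {x // x ∈ U} → Fin m) :
    selSet U m f ⊆ U := by
  intro y hy
  simp only [selSet, mem_image, mem_filter, mem_attach, true_and] at hy
  obtain ⟨x, _, rfl⟩ := hy
  exact x.2

lemma mem_selSet {U : Finset ℕ} {m : ℕ} [NeZero m] {f : {x // x ∈ U} → Fin m} {y : ℕ} :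
    y ∈ selSet U m f ↔ ∃ h : y ∈ U, f ⟨y, h⟩ = 0 := by
  simp only [selSet, mem_image, mem_filter, mem_attach, true_and]
  constructor
  · rintro ⟨⟨x, hx⟩, h0, rfl⟩; exact ⟨hx, h0⟩
  · rintro ⟨h, h0⟩; exact ⟨⟨y, h⟩, h0, rfl⟩

lemma card_filter_forall {U : Finset ℕ} {m : ℕ} (A : {x // x ∈ U} → Finset (Fin m)) :
    (Finset.univ.filter (fun f : {x // x ∈ U} → Fin m => ∀ x, f x ∈ A x)).card
      = ∏ x ∈ U.attach, (A x).card := by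
  have h : (Finset.univ.filter (fun f : {x // x ∈ U} → Fin m => ∀ x, f x ∈ A x))
      = Fintype.piFinset A := by
    ext f; simp [Fintype.mem_piFinset]
  rw [h, Fintype.card_piFinset, Finset.univ_eq_attach]

lemma pow_le_three_mul {m k : ℕ} (hk : 1 ≤ k) (hkm : k ≤ m) :
    (m : ℝ) ^ (k - 1) ≤ 3 * ((m : ℝ) - 1) ^ (k - 1) := by
  rcases hk.eq_or_lt with h1 | h2
  · rw [← h1]; norm_num
  · -- k ≥ 2, hence m ≥ 2
    have hm2 : 2 ≤ m := le_trans h2 hkm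
    have hm2' : (2 : ℝ) ≤ (m : ℝ) := by exact_mod_cast hm2
    have hpos : (0 : ℝ) < (m : ℝ) - 1 := by linarith
    have h1 : (m : ℝ) ≤ ((m : ℝ) - 1) * Real.exp (1 / ((m : ℝ) - 1)) := by
      have he := Real.add_one_le_exp (1 / ((m : ℝ) - 1))
      have := mul_le_mul_of_nonneg_left he hpos.le
      have e1 : ((m : ℝ) - 1) * (1 / ((m : ℝ) - 1) + 1) = (m : ℝ) := by
        field_simp; ring
      linarith [e1 ▸ this]
    set a := k - 1 with ha
    have hcast : (a : ℝ) ≤ (m : ℝ) - 1 := by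
      have : a + 1 ≤ m := by omega
      have : ((a : ℕ) : ℝ) + 1 ≤ (m : ℝ) := by exact_mod_cast this
      linarith
    have hstep : (m : ℝ) ^ a ≤ (((m : ℝ) - 1) * Real.exp (1 / ((m : ℝ) - 1))) ^ a :=
      pow_le_pow_left₀ (by positivity) h1 a
    have hexp : Real.exp (1 / ((m : ℝ) - 1)) ^ a = Real.exp ((a : ℝ) * (1 / ((m : ℝ) - 1))) := by
      rw [Real.exp_nat_mul]
    have harg : (a : ℝ) * (1 / ((m : ℝ) - 1)) ≤ 1 := by
      rw [mul_one_div, div_le_one hpos]; exact hcast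
    have hexp3 : Real.exp ((a : ℝ) * (1 / ((m : ℝ) - 1))) ≤ 3 := by
      calc Real.exp ((a : ℝ) * (1 / ((m : ℝ) - 1))) ≤ Real.exp 1 := Real.exp_le_exp.2 harg
        _ ≤ 3 := by linarith [Real.exp_one_lt_d9]
    calc (m : ℝ) ^ a ≤ (((m : ℝ) - 1) * Real.exp (1 / ((m : ℝ) - 1))) ^ a := hstep
      _ = ((m : ℝ) - 1) ^ a * Real.exp (1 / ((m : ℝ) - 1)) ^ a := mul_pow _ _ _
      _ ≤ ((m : ℝ) - 1) ^ a * 3 := by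
          apply mul_le_mul_of_nonneg_left _ (by positivity)
          rw [hexp]; exact hexp3
      _ = 3 * ((m : ℝ) - 1) ^ a := by ring

lemma pow_sub_one_le_half {m v : ℕ} (hm : 1 ≤ m) (hmv : m ≤ v) :
    ((m : ℝ) - 1) ^ v ≤ (m : ℝ) ^ v / 2 := by
  have hm' : (1 : ℝ) ≤ (m : ℝ) := by exact_mod_cast hm
  have hmpos : (0 : ℝ) < (m : ℝ) := by linarith
  have h1 : (m : ℝ) - 1 ≤ (m : ℝ) * Real.exp (-(1 / (m : ℝ))) := by
    have he := Real.add_one_le_exp (-(1 / (m : ℝ)))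
    have := mul_le_mul_of_nonneg_left he hmpos.le
    have e1 : (m : ℝ) * (-(1 / (m : ℝ)) + 1) = (m : ℝ) - 1 := by field_simp; ring
    linarith [e1 ▸ this]
  have hstep : ((m : ℝ) - 1) ^ v ≤ ((m : ℝ) * Real.exp (-(1 / (m : ℝ)))) ^ v :=
    pow_le_pow_left₀ (by linarith) h1 v
  have hexp : Real.exp (-(1 / (m : ℝ))) ^ v = Real.exp ((v : ℝ) * -(1 / (m : ℝ))) := by
    rw [Real.exp_nat_mul]
  have harg : (v : ℝ) * -(1 / (m : ℝ)) ≤ -1 := by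
    have hv : (m : ℝ) ≤ (v : ℝ) := by exact_mod_cast hmv
    rw [mul_neg, neg_le_neg_iff, mul_one_div, le_div_iff₀ hmpos]
    linarith
  have hexphalf : Real.exp ((v : ℝ) * -(1 / (m : ℝ))) ≤ 1 / 2 := by
    calc Real.exp ((v : ℝ) * -(1 / (m : ℝ))) ≤ Real.exp (-1) := Real.exp_le_exp.2 harg
      _ ≤ 1 / 2 := by
          rw [Real.exp_neg]
          rw [inv_le_comm₀ (Real.exp_pos 1) (by norm_num)]
          norm_num
          linarith [Real.exp_one_gt_d9]
  calc ((m : ℝ) - 1) ^ v ≤ ((m : ℝ) * Real.exp (-(1 / (m : ℝ)))) ^ v := hstep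
    _ = (m : ℝ) ^ v * Real.exp (-(1 / (m : ℝ))) ^ v := mul_pow _ _ _
    _ ≤ (m : ℝ) ^ v * (1 / 2) := by
        apply mul_le_mul_of_nonneg_left _ (by positivity)
        rw [hexp]; exact hexphalf
    _ = (m : ℝ) ^ v / 2 := by ring

lemma core_ineq {m k v : ℕ} (hm : 1 ≤ m) (hk : 1 ≤ k) (hkm : k ≤ m) (hmv : m ≤ v) :
    (m : ℝ) ^ (k - 1) * (m : ℝ) ^ v / 6
      ≤ ((m : ℝ) - 1) ^ (k - 1) * ((m : ℝ) ^ v - ((m : ℝ) - 1) ^ v) := by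
  have hA := pow_le_three_mul (m := m) hk hkm
  have hB := pow_sub_one_le_half hm hmv
  have h1 : (m : ℝ) ^ (k - 1) / 3 ≤ ((m : ℝ) - 1) ^ (k - 1) := by linarith
  have h2 : (m : ℝ) ^ v / 2 ≤ (m : ℝ) ^ v - ((m : ℝ) - 1) ^ v := by linarith
  have hnn1 : (0 : ℝ) ≤ (m : ℝ) ^ (k - 1) / 3 := by positivity
  have hnn2 : (0 : ℝ) ≤ (m : ℝ) ^ v / 2 := by positivity
  calc (m : ℝ) ^ (k - 1) * (m : ℝ) ^ v / 6
      = ((m : ℝ) ^ (k - 1) / 3) * ((m : ℝ) ^ v / 2) := by ring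
    _ ≤ ((m : ℝ) - 1) ^ (k - 1) * ((m : ℝ) ^ v - ((m : ℝ) - 1) ^ v) :=
        mul_le_mul h1 h2 hnn2 (le_trans hnn1 h1)

lemma bad_count_le (m : ℕ) [NeZero m] (U Nk Nv : Finset ℕ)
    (hkU : Nk ⊆ U) (hvU : Nv ⊆ U) (hdisj : Disjoint Nk Nv)
    (hk1 : 1 ≤ Nk.card) (hkm : Nk.card ≤ m) (hmv : m ≤ Nv.card) :
    ((Finset.univ.filter (fun f : {x // x ∈ U} → Fin m =>
        ¬ ((selSet U m f ∩ Nk).card = 1 ∧ 1 ≤ (selSet U m f ∩ Nv).card))).card : ℝ)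
      ≤ (1 - 1 / (6 * (m : ℝ))) * (m : ℝ) ^ U.card := by
  classical
  have hm : 1 ≤ m := Nat.one_le_iff_ne_zero.2 (NeZero.ne m)
  obtain ⟨x₀, hx₀⟩ := Finset.card_pos.mp (by omega : 0 < Nk.card)
  have hx₀U : x₀ ∈ U := hkU hx₀
  set N := U.card with hN
  set k := Nk.card with hk
  set v := Nv.card with hv
  have hkv : k + v ≤ N := by
    rw [hk, hv, hN, ← card_union_of_disjoint hdisj]
    exact card_le_card (union_subset hkU hvU)
  set w := N - k - v with hw
  -- the two pointwise families
  set A1 : {x // x ∈ U} → Finset (Fin m) :=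
    fun x => if (x : ℕ) = x₀ then {0} else if (x : ℕ) ∈ Nk then {0}ᶜ else Finset.univ with hA1
  set A2 : {x // x ∈ U} → Finset (Fin m) :=
    fun x => if (x : ℕ) = x₀ then {0} else if (x : ℕ) ∈ Nk ∪ Nv then {0}ᶜ else Finset.univ with hA2
  set E1 := Finset.univ.filter (fun f : {x // x ∈ U} → Fin m => ∀ x, f x ∈ A1 x) with hE1
  set E2 := Finset.univ.filter (fun f : {x // x ∈ U} → Fin m => ∀ x, f x ∈ A2 x) with hE2
  have hccompl : ({0}ᶜ : Finset (Fin m)).card = m - 1 := by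
    rw [Finset.card_compl, Finset.card_singleton, Fintype.card_fin]
  -- card of E1
  have hE1card : E1.card = (m - 1) ^ (k - 1) * m ^ (N - k) := by
    rw [hE1, card_filter_forall, Finset.prod_attach U
      (f := fun y => (if y = x₀ then ({0} : Finset (Fin m)) else if y ∈ Nk then {0}ᶜ else Finset.univ).card)]
    rw [← Finset.prod_sdiff hkU]
    have h1 : ∏ y ∈ U \ Nk, (if y = x₀ then ({0} : Finset (Fin m)) else if y ∈ Nk then {0}ᶜ else Finset.univ).card
        = m ^ (N - k) := by
      rw [Finset.prod_congr rfl (fun y hy => ?_), Finset.prod_const, Finset.card_sdiff_of_subset hkU]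
      have hyNk : y ∉ Nk := (Finset.mem_sdiff.mp hy).2
      have hyx : y ≠ x₀ := fun h => hyNk (h ▸ hx₀)
      rw [if_neg hyx, if_neg hyNk, Finset.card_univ, Fintype.card_fin]
    have h2 : ∏ y ∈ Nk, (if y = x₀ then ({0} : Finset (Fin m)) else if y ∈ Nk then {0}ᶜ else Finset.univ).card
        = (m - 1) ^ (k - 1) := by
      rw [← Finset.mul_prod_erase Nk _ hx₀, if_pos rfl, Finset.card_singleton, one_mul]
      rw [Finset.prod_congr rfl (fun y hy => ?_), Finset.prod_const, Finset.card_erase_of_mem hx₀]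
      obtain ⟨hyx, hyNk⟩ := Finset.mem_erase.mp hy
      rw [if_neg hyx, if_pos hyNk, hccompl]
    rw [h1, h2]; ring
  -- card of E2
  have hUsub : Nk ∪ Nv ⊆ U := union_subset hkU hvU
  have hE2card : E2.card = (m - 1) ^ (k - 1) * ((m - 1) ^ v * m ^ w) := by
    rw [hE2, card_filter_forall, Finset.prod_attach U
      (f := fun y => (if y = x₀ then ({0} : Finset (Fin m)) else if y ∈ Nk ∪ Nv then {0}ᶜ else Finset.univ).card)]
    rw [← Finset.prod_sdiff hUsub, Finset.prod_union hdisj]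
    have h1 : ∏ y ∈ U \ (Nk ∪ Nv), (if y = x₀ then ({0} : Finset (Fin m)) else if y ∈ Nk ∪ Nv then {0}ᶜ else Finset.univ).card
        = m ^ w := by
      rw [Finset.prod_congr rfl (fun y hy => ?_), Finset.prod_const, Finset.card_sdiff_of_subset hUsub,
        card_union_of_disjoint hdisj]
      · congr 1
        omega
      have hyu : y ∉ Nk ∪ Nv := (Finset.mem_sdiff.mp hy).2
      have hyx : y ≠ x₀ := fun h => hyu (Finset.mem_union_left _ (h ▸ hx₀))
      rw [if_neg hyx, if_neg hyu, Finset.card_univ, Fintype.card_fin]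
    have h2 : ∏ y ∈ Nk, (if y = x₀ then ({0} : Finset (Fin m)) else if y ∈ Nk ∪ Nv then {0}ᶜ else Finset.univ).card
        = (m - 1) ^ (k - 1) := by
      rw [← Finset.mul_prod_erase Nk _ hx₀, if_pos rfl, Finset.card_singleton, one_mul]
      rw [Finset.prod_congr rfl (fun y hy => ?_), Finset.prod_const, Finset.card_erase_of_mem hx₀]
      obtain ⟨hyx, hyNk⟩ := Finset.mem_erase.mp hy
      rw [if_neg hyx, if_pos (Finset.mem_union_left _ hyNk), hccompl]
    have h3 : ∏ y ∈ Nv, (if y = x₀ then ({0} : Finset (Fin m)) else if y ∈ Nk ∪ Nv then {0}ᶜ else Finset.univ).card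
        = (m - 1) ^ v := by
      rw [Finset.prod_congr rfl (fun y hy => ?_), Finset.prod_const]
      have hyx : y ≠ x₀ := fun h => (Finset.disjoint_right.mp hdisj hy) (h ▸ hx₀)
      rw [if_neg hyx, if_pos (Finset.mem_union_right _ hy), hccompl]
    rw [h1, h2, h3]; ring
  -- E2 ⊆ E1
  have hE21 : E2 ⊆ E1 := by
    intro f hf
    rw [hE2, Finset.mem_filter] at hf
    rw [hE1, Finset.mem_filter]
    refine ⟨Finset.mem_univ _, fun x => ?_⟩
    have h := hf.2 x
    rw [hA1]; rw [hA2] at h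
    dsimp only at h ⊢
    by_cases h0 : (x : ℕ) = x₀
    · rwa [if_pos h0] at h ⊢
    · rw [if_neg h0] at h ⊢
      by_cases h1 : (x : ℕ) ∈ Nk
      · rwa [if_pos h1, if_pos (Finset.mem_union_left _ h1)] at *
      · rw [if_neg h1]; exact Finset.mem_univ _
  -- E1 \ E2 consists of good colorings
  set Good := Finset.univ.filter (fun f : {x // x ∈ U} → Fin m =>
      (selSet U m f ∩ Nk).card = 1 ∧ 1 ≤ (selSet U m f ∩ Nv).card) with hGood
  have hsubGood : E1 \ E2 ⊆ Good := by
    intro f hf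
    obtain ⟨hf1, hf2⟩ := Finset.mem_sdiff.mp hf
    rw [hE1, Finset.mem_filter] at hf1
    have hall1 := hf1.2
    rw [hE2, Finset.mem_filter] at hf2
    push_neg at hf2
    obtain ⟨x, hxbad⟩ := hf2 (Finset.mem_univ _)
    -- analyze where the A2 constraint is violated
    have hxNv : (x : ℕ) ∈ Nv ∧ f x = 0 := by
      have h1 := hall1 x
      rw [hA1] at h1; rw [hA2] at hxbad
      dsimp only at h1 hxbad
      by_cases h0 : (x : ℕ) = x₀
      · rw [if_pos h0] at h1 hxbad; exact absurd h1 hxbad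
      · rw [if_neg h0] at h1 hxbad
        by_cases hk' : (x : ℕ) ∈ Nk
        · rw [if_pos hk'] at h1
          rw [if_pos (Finset.mem_union_left _ hk')] at hxbad
          exact absurd h1 hxbad
        · by_cases hv' : (x : ℕ) ∈ Nv
          · rw [if_pos (Finset.mem_union_right _ hv')] at hxbad
            refine ⟨hv', ?_⟩
            by_contra hne
            exact hxbad (Finset.mem_compl.mpr (by simpa using hne))
          · rw [if_neg (by simp [hk', hv'])] at hxbad
            exact absurd (Finset.mem_univ _) hxbad
    rw [hGood, Finset.mem_filter]
    refine ⟨Finset.mem_univ _, ?_, ?_⟩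
    · -- the intersection with Nk is exactly {x₀}
      have hset : selSet U m f ∩ Nk = {x₀} := by
        ext y
        simp only [Finset.mem_inter, mem_selSet, Finset.mem_singleton]
        constructor
        · rintro ⟨⟨hyU, hy0⟩, hyNk⟩
          by_contra hne
          have h1 := hall1 ⟨y, hyU⟩
          rw [hA1] at h1; dsimp only at h1
          rw [if_neg hne, if_pos hyNk] at h1
          exact (Finset.mem_compl.mp h1) (by simpa using hy0)
        · rintro rfl
          refine ⟨⟨hx₀U, ?_⟩, hx₀⟩
          have h1 := hall1 ⟨y, hx₀U⟩
          rw [hA1] at h1; dsimp only at h1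
          rw [if_pos rfl] at h1
          simpa using h1
      rw [hset, Finset.card_singleton]
    · refine Finset.card_pos.mpr ⟨(x : ℕ), ?_⟩
      rw [Finset.mem_inter, mem_selSet]
      exact ⟨⟨x.2, by simpa [Subtype.eta] using hxNv.2⟩, hxNv.1⟩
  -- counting
  have hcardfun : Fintype.card ({x // x ∈ U} → Fin m) = m ^ N := by
    rw [Fintype.card_fun, Fintype.card_fin, Fintype.card_coe]
  have hsum := Finset.card_filter_add_card_filter_not
    (s := (Finset.univ : Finset ({x // x ∈ U} → Fin m)))
    (p := fun f => (selSet U m f ∩ Nk).card = 1 ∧ 1 ≤ (selSet U m f ∩ Nv).card)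
  rw [Finset.card_univ, hcardfun] at hsum
  -- lower bound for Good.card
  have hE2le : E2.card ≤ E1.card := Finset.card_le_card hE21
  have hGoodlb : ((E1.card : ℝ) - E2.card) ≤ Good.card := by
    have h := Finset.card_le_card hsubGood
    rw [Finset.card_sdiff_of_subset hE21] at h
    have := Nat.cast_le (α := ℝ) |>.mpr h
    rwa [Nat.cast_sub hE2le] at this
  -- numeric lower bound
  have hm1 : ((m - 1 : ℕ) : ℝ) = (m : ℝ) - 1 := by
    rw [Nat.cast_sub hm, Nat.cast_one]
  have hNk' : N - k = v + w := by omega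
  have hkey : (m : ℝ) ^ N / (6 * m) ≤ (E1.card : ℝ) - E2.card := by
    have hc := core_ineq (m := m) (k := k) (v := v) hm hk1 hkm hmv
    have hwnn : (0 : ℝ) ≤ (m : ℝ) ^ w := by positivity
    have hmul := mul_le_mul_of_nonneg_right hc hwnn
    have hE1r : (E1.card : ℝ) = ((m : ℝ) - 1) ^ (k - 1) * ((m : ℝ) ^ v * (m : ℝ) ^ w) := by
      rw [hE1card, hNk', pow_add]; push_cast [hm1]; ring
    have hE2r : (E2.card : ℝ) = ((m : ℝ) - 1) ^ (k - 1) * (((m : ℝ) - 1) ^ v * (m : ℝ) ^ w) := by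
      rw [hE2card]; push_cast [hm1]; ring
    have hNsplit : N = (k - 1) + v + w + 1 := by omega
    have hmN : (m : ℝ) ^ N = (m : ℝ) ^ (k - 1) * (m : ℝ) ^ v * (m : ℝ) ^ w * (m : ℝ) := by
      rw [hNsplit]; rw [pow_add, pow_add, pow_add, pow_one]
    rw [hE1r, hE2r, hmN]
    have hmpos : (0 : ℝ) < (m : ℝ) := by exact_mod_cast hm
    rw [div_le_iff₀ (by positivity)]
    nlinarith [hmul, hmpos]
  -- conclude
  have hGoodlb' : (m : ℝ) ^ N / (6 * m) ≤ (Good.card : ℝ) := le_trans hkey hGoodlb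
  have hBad : ((Finset.univ.filter (fun f : {x // x ∈ U} → Fin m =>
      ¬ ((selSet U m f ∩ Nk).card = 1 ∧ 1 ≤ (selSet U m f ∩ Nv).card))).card : ℝ)
      = (m : ℝ) ^ N - Good.card := by
    rw [hGood]
    have : ((m ^ N : ℕ) : ℝ) = (m : ℝ) ^ N := by push_cast; ring
    rw [← this, ← hsum]
    push_cast; ring
  rw [hBad]
  have hmpos : (0 : ℝ) < (m : ℝ) := by exact_mod_cast hm
  have heq : (m : ℝ) ^ N / (6 * m) = 1 / (6 * m) * (m : ℝ) ^ N := by ring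
  rw [heq] at hGoodlb'
  nlinarith [hGoodlb']

/-- Core probabilistic-method step at a fixed dyadic scale: for a fixed integer `c ≥ 2`
there is a constant `d > 0` such that for all integers `l > 3` and `1 ≤ m ≤ l` there is a
family `F` of subsets of `{1,…,l^c}` with `|F| ≤ d·l·m·log l` such that for all disjoint
`N_k, N_uk ⊆ {1,…,l^c}` with `⌈m/2⌉ ≤ |N_k| ≤ m` and `|N_uk| ≥ l`, some `S ∈ F`
satisfies `|S ∩ N_k| = 1` and `|S ∩ N_uk| ≥ 1`. -/
theorem selecting_colliding_dyadic_scale (c : ℕ) (hc : 2 ≤ c) :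
    ∃ d : ℝ, 0 < d ∧
      ∀ l m : ℕ, 3 < l → 1 ≤ m → m ≤ l →
        ∃ F : Finset (Finset ℕ),
          (∀ S ∈ F, S ⊆ Finset.Icc 1 (l ^ c)) ∧
          (F.card : ℝ) ≤ d * (l : ℝ) * (m : ℝ) * Real.log (l : ℝ) ∧
          (∀ Nk Nuk : Finset ℕ,
            Nk ⊆ Finset.Icc 1 (l ^ c) → Nuk ⊆ Finset.Icc 1 (l ^ c) →
            Disjoint Nk Nuk → (m + 1) / 2 ≤ Nk.card → Nk.card ≤ m → l ≤ Nuk.card →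
            ∃ S ∈ F, (S ∩ Nk).card = 1 ∧ 1 ≤ (S ∩ Nuk).card) := by
  classical
  have hc2 : (2 : ℝ) ≤ (c : ℝ) := by exact_mod_cast hc
  refine ⟨26 * (c : ℝ), by linarith, ?_⟩
  intro l m hl hm1 hml
  haveI : NeZero m := ⟨by omega⟩
  set n := l ^ c with hn
  set U : Finset ℕ := Finset.Icc 1 n with hU
  have hUcard : U.card = n := by rw [hU, Nat.card_Icc]; omega
  have hl4 : (4 : ℝ) ≤ (l : ℝ) := by exact_mod_cast hl
  have hlpos : (0 : ℝ) < (l : ℝ) := by linarith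
  have hm1' : (1 : ℝ) ≤ (m : ℝ) := by exact_mod_cast hm1
  have hlog1 : 1 ≤ Real.log (l : ℝ) := by
    rw [Real.le_log_iff_exp_le hlpos]
    linarith [Real.exp_one_lt_d9]
  set X : ℝ := ((24 * c * l * m : ℕ) : ℝ) * Real.log (l : ℝ) with hX
  have hXnn : 0 ≤ X := by
    rw [hX]; positivity
  set t : ℕ := ⌊X⌋₊ + 1 with ht
  -- the set of "pairs" to be covered
  set Pairs : Finset (Finset ℕ × Finset ℕ) := (U.powerset ×ˢ U.powerset).filter
    (fun P => ((m + 1) / 2 ≤ P.1.card ∧ P.1.card ≤ m) ∧ P.2.card = l ∧ Disjoint P.1 P.2)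
    with hPairs
  set BadT : (Finset ℕ × Finset ℕ) → Finset (Fin t → ({x // x ∈ U} → Fin m)) :=
    fun P => Finset.univ.filter (fun w => ∀ i, ¬ ((selSet U m (w i) ∩ P.1).card = 1 ∧
      1 ≤ (selSet U m (w i) ∩ P.2).card)) with hBadT
  set AllBad := Pairs.biUnion BadT with hAllBad
  -- per-pair bound
  have hpair : ∀ P ∈ Pairs, ((BadT P).card : ℝ)
      ≤ ((1 - 1 / (6 * (m : ℝ))) * (m : ℝ) ^ n) ^ t := by
    intro P hP
    rw [hPairs, Finset.mem_filter, Finset.mem_product] at hP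
    obtain ⟨⟨hP1, hP2⟩, ⟨hq1, hq2⟩, hPl, hPd⟩ := hP
    have hP1U : P.1 ⊆ U := Finset.mem_powerset.mp hP1
    have hP2U : P.2 ⊆ U := Finset.mem_powerset.mp hP2
    have hbase := bad_count_le m U P.1 P.2 hP1U hP2U hPd (by omega) hq2
      (by omega : m ≤ P.2.card)
    rw [hUcard] at hbase
    set Bad0 := Finset.univ.filter (fun f : {x // x ∈ U} → Fin m =>
        ¬ ((selSet U m f ∩ P.1).card = 1 ∧ 1 ≤ (selSet U m f ∩ P.2).card)) with hBad0
    have hcard1 : (BadT P).card = Bad0.card ^ t := by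
      have hEq : BadT P = Fintype.piFinset (fun _ : Fin t => Bad0) := by
        ext v
        simp only [hBadT, hBad0, Fintype.mem_piFinset, Finset.mem_filter, Finset.mem_univ,
          true_and]
      rw [hEq, Fintype.card_piFinset, Finset.prod_const, Finset.card_univ, Fintype.card_fin]
    rw [hcard1]
    push_cast
    exact pow_le_pow_left₀ (Nat.cast_nonneg _) hbase t
  -- bound on number of pairs
  have hn1 : 1 ≤ n := Nat.one_le_pow _ _ (by omega)
  have hPairscard : Pairs.card ≤ l ^ (4 * c * l) := by
    have hsub : Pairs ⊆ (U.powerset.filter fun s => s.card ≤ m) ×ˢ U.powersetCard l := by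
      intro P hP
      rw [hPairs, Finset.mem_filter, Finset.mem_product] at hP
      obtain ⟨⟨hP1, hP2⟩, ⟨_, h2⟩, hPl, _⟩ := hP
      rw [Finset.mem_product]
      exact ⟨Finset.mem_filter.mpr ⟨hP1, h2⟩,
        Finset.mem_powersetCard.mpr ⟨Finset.mem_powerset.mp hP2, hPl⟩⟩
    have h1 : (U.powerset.filter fun s => s.card ≤ m).card ≤ (m + 1) * n ^ m := by
      have hsub2 : (U.powerset.filter fun s => s.card ≤ m)
          ⊆ (Finset.range (m + 1)).biUnion (fun j => U.powersetCard j) := by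
        intro s hs
        rw [Finset.mem_filter, Finset.mem_powerset] at hs
        exact Finset.mem_biUnion.mpr ⟨s.card, Finset.mem_range.mpr (by omega),
          Finset.mem_powersetCard.mpr ⟨hs.1, rfl⟩⟩
      calc (U.powerset.filter fun s => s.card ≤ m).card
          ≤ ((Finset.range (m + 1)).biUnion (fun j => U.powersetCard j)).card :=
            Finset.card_le_card hsub2
        _ ≤ ∑ j ∈ Finset.range (m + 1), (U.powersetCard j).card := Finset.card_biUnion_le
        _ ≤ ∑ j ∈ Finset.range (m + 1), n ^ m := by
            apply Finset.sum_le_sum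
            intro j hj
            rw [Finset.card_powersetCard, hUcard]
            exact le_trans (Nat.choose_le_pow n j)
              (Nat.pow_le_pow_right hn1 (by simpa using Nat.lt_succ_iff.mp (Finset.mem_range.mp hj)))
        _ = (m + 1) * n ^ m := by rw [Finset.sum_const, Finset.card_range, smul_eq_mul]
    have h2 : (U.powersetCard l).card ≤ n ^ l := by
      rw [Finset.card_powersetCard, hUcard]
      exact Nat.choose_le_pow n l
    calc Pairs.card ≤ ((U.powerset.filter fun s => s.card ≤ m) ×ˢ U.powersetCard l).card :=
          Finset.card_le_card hsub
      _ = (U.powerset.filter fun s => s.card ≤ m).card * (U.powersetCard l).card :=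
          Finset.card_product _ _
      _ ≤ ((m + 1) * n ^ m) * n ^ l := Nat.mul_le_mul h1 h2
      _ = (m + 1) * n ^ (m + l) := by rw [pow_add]; ring
      _ ≤ l ^ 2 * n ^ (m + l) := by
          apply Nat.mul_le_mul_right
          have : l * l ≥ 4 * l := Nat.mul_le_mul_right l (by omega)
          nlinarith
      _ = l ^ (2 + c * (m + l)) := by rw [hn, ← pow_mul, ← pow_add]
      _ ≤ l ^ (4 * c * l) := by
          apply Nat.pow_le_pow_right (by omega)
          have h1 : c * (m + l) ≤ c * (2 * l) := Nat.mul_le_mul_left c (by omega)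
          have h2 : 2 ≤ 2 * (c * l) := by
            have : 1 ≤ c * l := Nat.one_le_iff_ne_zero.mpr (Nat.mul_ne_zero (by omega) (by omega))
            omega
          have h3 : c * (2 * l) = 2 * (c * l) := by ring
          calc 2 + c * (m + l) ≤ 2 + c * (2 * l) := by omega
            _ ≤ 2 * (c * l) + 2 * (c * l) := by omega
            _ = 4 * c * l := by ring
  -- strict smallness of Pairs.card * β^t
  have hmR : (0 : ℝ) < 6 * (m : ℝ) := by linarith
  set β : ℝ := 1 - 1 / (6 * (m : ℝ)) with hβ
  have hβ0 : 0 ≤ β := by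
    rw [hβ]
    have : 1 / (6 * (m : ℝ)) ≤ 1 / 6 := by
      apply div_le_div_of_nonneg_left <;> linarith
    linarith
  have hkey : (Pairs.card : ℝ) * β ^ t < 1 := by
    have hβe : β ≤ Real.exp (-(1 / (6 * (m : ℝ)))) := by
      rw [hβ]
      linarith [Real.add_one_le_exp (-(1 / (6 * (m : ℝ))))]
    have hβt : β ^ t ≤ Real.exp (-((t : ℝ) * (1 / (6 * (m : ℝ))))) := by
      calc β ^ t ≤ Real.exp (-(1 / (6 * (m : ℝ)))) ^ t := pow_le_pow_left₀ hβ0 hβe t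
        _ = Real.exp ((t : ℝ) * -(1 / (6 * (m : ℝ)))) := (Real.exp_nat_mul _ t).symm
        _ = Real.exp (-((t : ℝ) * (1 / (6 * (m : ℝ))))) := by ring_nf
    have hPlt : (Pairs.card : ℝ) < Real.exp ((t : ℝ) * (1 / (6 * (m : ℝ)))) := by
      have hcast : (Pairs.card : ℝ) ≤ ((l : ℝ)) ^ (4 * c * l) := by
        calc (Pairs.card : ℝ) ≤ ((l ^ (4 * c * l) : ℕ) : ℝ) := by exact_mod_cast hPairscard
          _ = (l : ℝ) ^ (4 * c * l) := by push_cast; ring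
      have hexp : ((l : ℝ)) ^ (4 * c * l) = Real.exp (((4 * c * l : ℕ) : ℝ) * Real.log l) := by
        rw [← Real.log_pow, Real.exp_log (by positivity)]
      have harg : ((4 * c * l : ℕ) : ℝ) * Real.log l < (t : ℝ) * (1 / (6 * (m : ℝ))) := by
        rw [mul_one_div, lt_div_iff₀ hmR]
        have hXt : X < (t : ℝ) := by
          rw [ht]; push_cast
          exact Nat.lt_floor_add_one X
        have : ((4 * c * l : ℕ) : ℝ) * Real.log l * (6 * (m : ℝ)) = X := by
          rw [hX]; push_cast; ring
        linarith
      calc (Pairs.card : ℝ) ≤ (l : ℝ) ^ (4 * c * l) := hcast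
        _ = Real.exp (((4 * c * l : ℕ) : ℝ) * Real.log l) := hexp
        _ < Real.exp ((t : ℝ) * (1 / (6 * (m : ℝ)))) := Real.exp_lt_exp.mpr harg
    calc (Pairs.card : ℝ) * β ^ t
        ≤ (Pairs.card : ℝ) * Real.exp (-((t : ℝ) * (1 / (6 * (m : ℝ))))) := by
          apply mul_le_mul_of_nonneg_left hβt (by positivity)
      _ < Real.exp ((t : ℝ) * (1 / (6 * (m : ℝ)))) * Real.exp (-((t : ℝ) * (1 / (6 * (m : ℝ))))) := by
          apply mul_lt_mul_of_pos_right hPlt (Real.exp_pos _)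
      _ = 1 := by rw [← Real.exp_add]; simp
  -- total bad count is less than total count
  have hM : (0 : ℝ) < (m : ℝ) ^ n := by positivity
  have hAllcard : (AllBad.card : ℝ) < ((m : ℝ) ^ n) ^ t := by
    have h1 : (AllBad.card : ℝ) ≤ ∑ P ∈ Pairs, ((BadT P).card : ℝ) := by
      rw [hAllBad]
      exact_mod_cast Finset.card_biUnion_le
    have h2 : ∑ P ∈ Pairs, ((BadT P).card : ℝ) ≤ (Pairs.card : ℝ) * (β * (m : ℝ) ^ n) ^ t := by
      have hs := Finset.sum_le_card_nsmul Pairs (fun P => ((BadT P).card : ℝ))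
        ((β * (m : ℝ) ^ n) ^ t) hpair
      rwa [nsmul_eq_mul] at hs
    calc (AllBad.card : ℝ) ≤ (Pairs.card : ℝ) * (β * (m : ℝ) ^ n) ^ t := le_trans h1 h2
      _ = ((Pairs.card : ℝ) * β ^ t) * ((m : ℝ) ^ n) ^ t := by rw [mul_pow]; ring
      _ < 1 * ((m : ℝ) ^ n) ^ t := by
          apply mul_lt_mul_of_pos_right hkey (by positivity)
      _ = ((m : ℝ) ^ n) ^ t := one_mul _
  -- extract a good tuple
  obtain ⟨w, hw⟩ : ∃ w : Fin t → ({x // x ∈ U} → Fin m), w ∉ AllBad := by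
    by_contra h
    push_neg at h
    have huniv : (Finset.univ : Finset (Fin t → ({x // x ∈ U} → Fin m))) ⊆ AllBad :=
      fun w _ => h w
    have hcard := Finset.card_le_card huniv
    rw [Finset.card_univ, Fintype.card_fun, Fintype.card_fun, Fintype.card_fin,
      Fintype.card_fin, Fintype.card_coe, hUcard] at hcard
    have : ((m ^ n) ^ t : ℕ) ≤ (AllBad.card : ℕ) := hcard
    have hcast : (((m ^ n) ^ t : ℕ) : ℝ) ≤ (AllBad.card : ℝ) := by exact_mod_cast this
    push_cast at hcast
    linarith
  -- the family
  refine ⟨Finset.image (fun i : Fin t => selSet U m (w i)) Finset.univ, ?_, ?_, ?_⟩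
  · intro S hS
    obtain ⟨i, _, rfl⟩ := Finset.mem_image.mp hS
    exact selSet_subset U m (w i)
  · calc ((Finset.image (fun i : Fin t => selSet U m (w i)) Finset.univ).card : ℝ)
        ≤ ((Finset.univ : Finset (Fin t)).card : ℝ) := by
          exact_mod_cast Finset.card_image_le
      _ = (t : ℝ) := by rw [Finset.card_univ, Fintype.card_fin]
      _ ≤ X + 1 := by
          rw [ht]; push_cast
          linarith [Nat.floor_le hXnn]
      _ ≤ 26 * (c : ℝ) * (l : ℝ) * (m : ℝ) * Real.log (l : ℝ) := by
          rw [hX]; push_cast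
          have e1 : (1:ℝ) ≤ (c:ℝ) * (l:ℝ) := by nlinarith
          have e2 : (1:ℝ) ≤ (c:ℝ) * (l:ℝ) * (m:ℝ) := by nlinarith
          have e3 : (1:ℝ) ≤ (c:ℝ) * (l:ℝ) * (m:ℝ) * Real.log (l:ℝ) := by nlinarith
          linarith
  · intro Nk Nuk hNkU hNukU hdisj hlow hup hNuk
    obtain ⟨Nv, hNvsub, hNvcard⟩ := Finset.exists_subset_card_eq hNuk
    have hP : (Nk, Nv) ∈ Pairs := by
      rw [hPairs, Finset.mem_filter, Finset.mem_product]
      exact ⟨⟨Finset.mem_powerset.mpr hNkU, Finset.mem_powerset.mpr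
        (hNvsub.trans hNukU)⟩, ⟨hlow, hup⟩, hNvcard, hdisj.mono_right hNvsub⟩
    have hnotbad : w ∉ BadT (Nk, Nv) := fun hbad =>
      hw (Finset.mem_biUnion.mpr ⟨(Nk, Nv), hP, hbad⟩)
    rw [hBadT] at hnotbad
    simp only [Finset.mem_filter, Finset.mem_univ, true_and] at hnotbad
    push_neg at hnotbad
    obtain ⟨i, hi⟩ := hnotbad
    refine ⟨selSet U m (w i), Finset.mem_image.mpr ⟨i, Finset.mem_univ _, rfl⟩, hi.1, ?_⟩
    calc 1 ≤ (selSet U m (w i) ∩ Nv).card := hi.2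
      _ ≤ (selSet U m (w i) ∩ Nuk).card :=
          Finset.card_le_card (Finset.inter_subset_inter le_rfl hNvsub)
end

section
/- Lower bound on the single-set success probability: for all integers m ≥ 2, x and l with m/2 ≤ x ≤ m and m ≤ l (so x ≥ 1), the real number (x / m) · (1 − 1/m)^{x−1} · (1 − (1 − 1/m)^{l}) is at least 1/(2m). -/
/-- Lower bound on the single-set success probability: for integers `m ≥ 2`, `x`, `l`
with `m/2 ≤ x ≤ m` and `m ≤ l`, we have
`(x/m)·(1 − 1/m)^(x−1)·(1 − (1 − 1/m)^l) ≥ 1/(2m)`. -/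
theorem single_set_success_lower_bound
    (m x l : ℕ) (hm : 2 ≤ m) (hx_lo : (m : ℝ) / 2 ≤ (x : ℝ)) (hx_hi : x ≤ m)
    (hl : m ≤ l) :
    1 / (2 * (m : ℝ)) ≤
      ((x : ℝ) / (m : ℝ)) * (1 - 1 / (m : ℝ)) ^ (x - 1) *
        (1 - (1 - 1 / (m : ℝ)) ^ l) := by
  have hm0 : (0:ℝ) < (m:ℝ) := by positivity
  have hm2 : (2:ℝ) ≤ (m:ℝ) := by exact_mod_cast hm
  have hx1 : 1 ≤ x := by
    by_contra h
    push_neg at h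
    interval_cases x
    · simp at hx_lo; linarith
  have hx1R : (1:ℝ) ≤ (x:ℝ) := by exact_mod_cast hx1
  have hxmR : (x:ℝ) ≤ (m:ℝ) := by exact_mod_cast hx_hi
  have hb0 : (0:ℝ) ≤ 1 - 1/(m:ℝ) := by
    rw [sub_nonneg, div_le_one hm0]; linarith
  have hb1 : (1 - 1/(m:ℝ)) ≤ 1 := by
    have : (0:ℝ) ≤ 1/(m:ℝ) := by positivity
    linarith
  -- Step 1: first two factors ≥ 1/m
  have hcast : ((x - 1 : ℕ) : ℝ) = (x:ℝ) - 1 := by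
    have := Nat.cast_sub hx1 (R := ℝ); simpa using this
  have hbern : 1 + ((x-1:ℕ):ℝ) * (-(1/(m:ℝ))) ≤ (1 + (-(1/(m:ℝ)))) ^ (x-1) := by
    apply one_add_mul_le_pow
    have : 1/(m:ℝ) ≤ 1 := by rw [div_le_one hm0]; linarith
    linarith
  have hpow_lb : 1 - ((x:ℝ)-1)/(m:ℝ) ≤ (1 - 1/(m:ℝ)) ^ (x-1) := by
    have := hbern
    rw [hcast] at this
    have h1 : (1:ℝ) + ((x:ℝ)-1) * (-(1/(m:ℝ))) = 1 - ((x:ℝ)-1)/(m:ℝ) := by ring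
    have h2 : (1:ℝ) + (-(1/(m:ℝ))) = 1 - 1/(m:ℝ) := by ring
    rw [h1, h2] at this
    exact this
  have hxm_nonneg : (0:ℝ) ≤ (x:ℝ)/(m:ℝ) := by positivity
  have step1 : 1/(m:ℝ) ≤ ((x:ℝ)/(m:ℝ)) * (1 - 1/(m:ℝ)) ^ (x-1) := by
    have h3 : ((x:ℝ)/(m:ℝ)) * (1 - ((x:ℝ)-1)/(m:ℝ)) ≤
        ((x:ℝ)/(m:ℝ)) * (1 - 1/(m:ℝ)) ^ (x-1) :=
      mul_le_mul_of_nonneg_left hpow_lb hxm_nonneg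
    refine le_trans ?_ h3
    have key : (0:ℝ) ≤ ((x:ℝ) - 1) * ((m:ℝ) - (x:ℝ)) :=
      mul_nonneg (by linarith) (by linarith)
    have hm0' : (m:ℝ) ≠ 0 := ne_of_gt hm0
    have hid : ((x:ℝ)/(m:ℝ)) * (1 - ((x:ℝ)-1)/(m:ℝ)) - 1/(m:ℝ)
        = (((x:ℝ)-1)*((m:ℝ)-(x:ℝ)))/(m:ℝ)^2 := by
      field_simp
      ring
    have hnn : (0:ℝ) ≤ (((x:ℝ)-1)*((m:ℝ)-(x:ℝ)))/(m:ℝ)^2 :=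
      div_nonneg key (sq_nonneg _)
    linarith
  -- Step 2: last factor ≥ 1/2
  have hexp : (1 - 1/(m:ℝ)) ^ m ≤ 1/2 := by
    have h1 : (1 - 1/(m:ℝ)) ≤ Real.exp (-(1/(m:ℝ))) := by
      have := Real.add_one_le_exp (-(1/(m:ℝ)))
      linarith
    have h2 : (1 - 1/(m:ℝ)) ^ m ≤ Real.exp (-(1/(m:ℝ))) ^ m :=
      pow_le_pow_left₀ hb0 h1 m
    have h3 : Real.exp (-(1/(m:ℝ))) ^ m = Real.exp (-(1/(m:ℝ)) * m) := by
      rw [← Real.exp_nat_mul]; ring_nf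
    have h4 : -(1/(m:ℝ)) * m = -1 := by field_simp
    have h5 : Real.exp (-1 : ℝ) ≤ 1/2 := by
      rw [Real.exp_neg]
      have he : (2:ℝ) ≤ Real.exp 1 := by
        have := Real.add_one_le_exp (1:ℝ); linarith
      rw [inv_le_comm₀ (by linarith) (by norm_num)]
      simpa using he
    calc (1 - 1/(m:ℝ)) ^ m ≤ Real.exp (-(1/(m:ℝ))) ^ m := h2
      _ = Real.exp (-1) := by rw [h3, h4]
      _ ≤ 1/2 := h5
  have hpow_mono : (1 - 1/(m:ℝ)) ^ l ≤ (1 - 1/(m:ℝ)) ^ m :=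
    pow_le_pow_of_le_one hb0 hb1 hl
  have step2 : (1/2 : ℝ) ≤ 1 - (1 - 1/(m:ℝ)) ^ l := by
    have := hpow_mono.trans hexp
    linarith
  -- Combine
  have hfin : 1/(m:ℝ) * (1/2) ≤
      (((x:ℝ)/(m:ℝ)) * (1 - 1/(m:ℝ)) ^ (x-1)) * (1 - (1 - 1/(m:ℝ)) ^ l) := by
    apply mul_le_mul step1 step2 (by norm_num) (le_trans (by positivity) step1)
  calc 1/(2*(m:ℝ)) = 1/(m:ℝ) * (1/2) := by ring
    _ ≤ _ := hfin
end

section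
/- Union-bound failure estimate: fix an integer c ≥ 2. There exists a constant d > 0 (depending only on c) such that for all integers l ≥ m ≥ 4 and every real t ≥ d · l · m · Real.log l, one has m² · (2·e·l^c / m)^{m/2} · (e · l^{c−1})^{l} · (1 − 1/(2m))^{t} < 1. -/
set_option maxHeartbeats 1000000


/-- Union-bound failure estimate: for a fixed integer `c ≥ 2` there is a constant `d > 0`
such that for all integers `l ≥ m ≥ 4` and every real `t ≥ d·l·m·log l`,
`m² · (2·e·l^c / m)^(m/2) · (e·l^(c−1))^l · (1 − 1/(2m))^t < 1`. -/
theorem union_bound_failure_estimate (c : ℕ) (hc : 2 ≤ c) :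
    ∃ d : ℝ, 0 < d ∧
      ∀ l m : ℕ, 4 ≤ m → m ≤ l →
        ∀ t : ℝ, d * (l : ℝ) * (m : ℝ) * Real.log (l : ℝ) ≤ t →
          (m : ℝ) ^ 2 *
              (2 * Real.exp 1 * (l : ℝ) ^ c / (m : ℝ)) ^ ((m : ℝ) / 2) *
              (Real.exp 1 * (l : ℝ) ^ (c - 1)) ^ l *
              (1 - 1 / (2 * (m : ℝ))) ^ t < 1 := by
  refine ⟨4 * c + 8, by positivity, ?_⟩
  intro l m hm hml t ht
  have hm4 : (4:ℝ) ≤ (m:ℝ) := by exact_mod_cast hm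
  have hml' : (m:ℝ) ≤ (l:ℝ) := by exact_mod_cast hml
  have hl4 : (4:ℝ) ≤ (l:ℝ) := le_trans hm4 hml'
  have hm0 : (0:ℝ) < (m:ℝ) := by linarith
  have hl0 : (0:ℝ) < (l:ℝ) := by linarith
  set L := Real.log (l:ℝ) with hLdef
  have hL1 : (1:ℝ) ≤ L := by
    rw [hLdef, Real.le_log_iff_exp_le hl0]
    have := Real.exp_one_lt_d9
    linarith
  have hL0 : (0:ℝ) < L := lt_of_lt_of_le one_pos hL1
  have hA : (0:ℝ) < 2 * Real.exp 1 * (l:ℝ)^c / m := by positivity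
  have hB : (0:ℝ) < Real.exp 1 * (l:ℝ)^(c-1) := by positivity
  have hinv : (0:ℝ) < 1/(2*(m:ℝ)) := by positivity
  have hinv8 : 1/(2*(m:ℝ)) ≤ 1/8 := by
    rw [div_le_div_iff₀ (by positivity) (by norm_num)]
    linarith
  have hq : (0:ℝ) < 1 - 1/(2*(m:ℝ)) := by linarith
  have hLHS : 0 < (m : ℝ) ^ 2 *
      (2 * Real.exp 1 * (l : ℝ) ^ c / (m : ℝ)) ^ ((m : ℝ) / 2) *
      (Real.exp 1 * (l : ℝ) ^ (c - 1)) ^ l *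
      (1 - 1 / (2 * (m : ℝ))) ^ t := by positivity
  rw [← Real.log_neg_iff hLHS]
  -- expand the log
  have hlog : Real.log ((m : ℝ) ^ 2 *
      (2 * Real.exp 1 * (l : ℝ) ^ c / (m : ℝ)) ^ ((m : ℝ) / 2) *
      (Real.exp 1 * (l : ℝ) ^ (c - 1)) ^ l *
      (1 - 1 / (2 * (m : ℝ))) ^ t)
      = 2 * Real.log m + ((m:ℝ)/2) * Real.log (2 * Real.exp 1 * (l:ℝ)^c / m)
        + (l:ℝ) * Real.log (Real.exp 1 * (l:ℝ)^(c-1))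
        + t * Real.log (1 - 1/(2*(m:ℝ))) := by
    rw [Real.log_mul (by positivity) (by positivity),
        Real.log_mul (by positivity) (by positivity),
        Real.log_mul (by positivity) (by positivity),
        Real.log_pow, Real.log_pow, Real.log_rpow hA, Real.log_rpow hq]
    push_cast
    ring
  rw [hlog]
  -- bound each term
  have hlm : Real.log (m:ℝ) ≤ L := Real.log_le_log hm0 hml'
  have hAle : Real.log (2 * Real.exp 1 * (l:ℝ)^c / m) ≤ ((c:ℝ) + 2) * L := by
    have h1 : 2 * Real.exp 1 * (l:ℝ)^c / m ≤ 2 * Real.exp 1 * (l:ℝ)^c := by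
      apply div_le_self (by positivity) (by linarith)
    have h2 := Real.log_le_log (by positivity) h1
    rw [Real.log_mul (by positivity) (by positivity),
        Real.log_mul (by norm_num) (Real.exp_ne_zero 1), Real.log_exp,
        Real.log_pow] at h2
    have hlog2 : Real.log 2 < 1 := by
      have := Real.log_two_lt_d9; linarith
    have hc0 : (0:ℝ) ≤ (c:ℝ) := Nat.cast_nonneg c
    nlinarith
  have hBle : Real.log (Real.exp 1 * (l:ℝ)^(c-1)) ≤ (c:ℝ) * L := by
    rw [Real.log_mul (Real.exp_ne_zero 1) (by positivity), Real.log_exp,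
        Real.log_pow]
    have hcast : ((c - 1 : ℕ) : ℝ) = (c:ℝ) - 1 := by
      have : 1 ≤ c := by omega
      push_cast [this]; ring
    rw [hcast]
    nlinarith
  have hlogq : Real.log (1 - 1/(2*(m:ℝ))) ≤ -(1/(2*(m:ℝ))) := by
    have := Real.log_le_sub_one_of_pos hq
    linarith
  have hlogqneg : Real.log (1 - 1/(2*(m:ℝ))) ≤ 0 := by linarith
  have hD0 : (0:ℝ) ≤ (4*(c:ℝ)+8) * l * m * L := by positivity
  have ht1 : t * Real.log (1 - 1/(2*(m:ℝ)))
      ≤ ((4*(c:ℝ)+8) * l * m * L) * Real.log (1 - 1/(2*(m:ℝ))) := by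
    apply mul_le_mul_of_nonpos_right _ hlogqneg
    calc (4*(c:ℝ)+8) * l * m * L = (4*(c:ℕ)+8 : ℝ) * l * m * L := by push_cast; ring
      _ ≤ t := ht
  have ht2 : ((4*(c:ℝ)+8) * l * m * L) * Real.log (1 - 1/(2*(m:ℝ)))
      ≤ ((4*(c:ℝ)+8) * l * m * L) * (-(1/(2*(m:ℝ)))) :=
    mul_le_mul_of_nonneg_left hlogq hD0
  have ht3 : ((4*(c:ℝ)+8) * l * m * L) * (-(1/(2*(m:ℝ)))) = -((2*(c:ℝ)+4) * l * L) := by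
    field_simp
    ring
  -- combine
  have hmL : (m:ℝ) * L ≤ (l:ℝ) * L := mul_le_mul_of_nonneg_right hml' hL0.le
  have hLlL : L ≤ (l:ℝ) * L := le_mul_of_one_le_left hL0.le (by linarith)
  have hlL0 : (0:ℝ) < (l:ℝ) * L := by positivity
  have hc2 : (2:ℝ) ≤ (c:ℝ) := by exact_mod_cast hc
  have hterm2 : ((m:ℝ)/2) * Real.log (2 * Real.exp 1 * (l:ℝ)^c / m)
      ≤ ((m:ℝ)/2) * (((c:ℝ) + 2) * L) :=
    mul_le_mul_of_nonneg_left hAle (by positivity)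
  have hterm3 : (l:ℝ) * Real.log (Real.exp 1 * (l:ℝ)^(c-1)) ≤ (l:ℝ) * ((c:ℝ) * L) :=
    mul_le_mul_of_nonneg_left hBle hl0.le
  have hsum : 2 * Real.log m + ((m:ℝ)/2) * Real.log (2 * Real.exp 1 * (l:ℝ)^c / m)
        + (l:ℝ) * Real.log (Real.exp 1 * (l:ℝ)^(c-1))
        + t * Real.log (1 - 1/(2*(m:ℝ)))
      ≤ 2 * L + ((m:ℝ)/2) * (((c:ℝ)+2) * L) + (l:ℝ) * ((c:ℝ)*L)
        - (2*(c:ℝ)+4) * l * L := by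
    have := ht1.trans (ht2.trans_eq ht3)
    linarith
  refine lt_of_le_of_lt hsum ?_
  have h1 : ((m:ℝ)/2) * (((c:ℝ)+2) * L) ≤ ((l:ℝ)/2) * (((c:ℝ)+2) * L) :=
    mul_le_mul_of_nonneg_right (by linarith) (by positivity)
  have h2 : 4*L ≤ (l:ℝ)*L := mul_le_mul_of_nonneg_right hl4 hL0.le
  have h3 : 2*L + ((l:ℝ)/2) * (((c:ℝ)+2) * L) + (l:ℝ)*((c:ℝ)*L) - (2*(c:ℝ)+4)*(l:ℝ)*L
      = 2*L - ((c:ℝ)/2 + 3) * ((l:ℝ)*L) := by ring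
  have h4 : 4 * ((l:ℝ)*L) ≤ ((c:ℝ)/2+3) * ((l:ℝ)*L) :=
    mul_le_mul_of_nonneg_right (by linarith) hlL0.le
  linarith
end
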